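/- arXiv:1303.0892 — 8 statements merged into one kernel-verified Lean document; each statement's English description precedes it below -/
import Mathlib

section
/- Let $L = p/q$ where $p, q \in \mathbb{N}$ are relatively prime. Then for every $x \in \mathbb{R}$ and every $\eta \in \{1, \dots, q\}$, one has $f_L(\eta L - x) = f_L(\widetilde{\eta} L + x)$, where $\widetilde{\eta} = q - \eta + 1$. -/
open Filter MeasureTheory

/-- `f_{m,L}(x) = (|x-m+1|^{1/3} + |x-m-L|^{1/3} - |x-m|^{1/3} - |x-m+1-L|^{1/3})^3`. -/
noncomputable def fmL (L : ℝ) (m : ℤ) (x : ℝ) : ℝ :=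
  (|x - m + 1| ^ ((1 : ℝ) / 3) + |x - m - L| ^ ((1 : ℝ) / 3)
    - |x - m| ^ ((1 : ℝ) / 3) - |x - m + 1 - L| ^ ((1 : ℝ) / 3)) ^ 3

/-- `f_L(x) = ∑_{m ∈ ℤ} f_{m,L}(x)`. -/
noncomputable def fL (L : ℝ) (x : ℝ) : ℝ := ∑' (m : ℤ), fmL L m x

lemma fmL_reflect (L y : ℝ) (c m : ℤ) :
    fmL L m ((c : ℝ) + L - y) = fmL L (c + 1 - m) y := by
  unfold fmL
  push_cast
  rw [show (c : ℝ) + L - y - m + 1 - L = -(y - ((c : ℝ) + 1 - m)) by ring,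
      show (c : ℝ) + L - y - m + 1 = -(y - ((c : ℝ) + 1 - m) - L) by ring,
      show (c : ℝ) + L - y - m - L = -(y - ((c : ℝ) + 1 - m) + 1) by ring,
      show (c : ℝ) + L - y - m = -(y - ((c : ℝ) + 1 - m) + 1 - L) by ring,
      abs_neg, abs_neg, abs_neg, abs_neg]
  ring

lemma fL_reflect (L y : ℝ) (c : ℤ) : fL L ((c : ℝ) + L - y) = fL L y := by
  unfold fL
  calc ∑' m : ℤ, fmL L m ((c : ℝ) + L - y)
      = ∑' m : ℤ, fmL L (c + 1 - m) y := tsum_congr fun m => fmL_reflect L y c m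
    _ = ∑' m : ℤ, fmL L m y := (Equiv.subLeft (c + 1)).tsum_eq fun m => fmL L m y

/-- If `L = p/q` in lowest terms, then for every `x ∈ ℝ` and `η ∈ {1, …, q}`,
`f_L(ηL - x) = f_L(η̃L + x)` where `η̃ = q - η + 1`. -/
theorem fL_reflection (p q : ℕ) (hp : 0 < p) (hq : 0 < q) (hpq : Nat.Coprime p q)
    (L : ℝ) (hL : L = (p : ℝ) / (q : ℝ))
    (hsum : ∀ x : ℝ, Summable fun m : ℤ => fmL L m x) :
    ∀ (x : ℝ) (η : ℕ), 1 ≤ η → η ≤ q →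
      fL L ((η : ℝ) * L - x) = fL L (((q - η + 1 : ℕ) : ℝ) * L + x) := by
  intro x η h1 h2
  have hq0 : (q : ℝ) ≠ 0 := Nat.cast_ne_zero.mpr hq.ne'
  have hqL : (q : ℝ) * L = p := by rw [hL]; field_simp
  have key : ((q - η + 1 : ℕ) : ℝ) * L + x = ((p : ℤ) : ℝ) + L - ((η : ℝ) * L - x) := by
    rw [Nat.cast_add, Nat.cast_sub h2]
    push_cast
    rw [← hqL]; ring
  rw [key, fL_reflect]
end

section
/- Let $L = p/q$ where $p, q \in \mathbb{N}$ are relatively prime. Then for every $m \in \mathbb{Z}$, every $x \in \mathbb{R}$, and every $\eta \in \{1, \dots, q\}$, one has $f_{m,L}(\eta L - x) = f_{\widetilde{m},L}(\widetilde{\eta} L + x)$, where $\widetilde{m} = -m + 1 + p$ and $\widetilde{\eta} = q - \eta + 1$. -/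
open Filter MeasureTheory

lemma habs_neg (u v : ℝ) (h : u = -v) : |u| = |v| := by rw [h, abs_neg]

/-- If `L = p/q` in lowest terms, then for every `m ∈ ℤ`, `x ∈ ℝ` and `η ∈ {1, …, q}`,
`f_{m,L}(ηL - x) = f_{m̃,L}(η̃L + x)` where `m̃ = -m + 1 + p` and `η̃ = q - η + 1`. -/
theorem fmL_reflection (p q : ℕ) (hp : 0 < p) (hq : 0 < q) (hpq : Nat.Coprime p q)
    (L : ℝ) (hL : L = (p : ℝ) / (q : ℝ)) :
    ∀ (m : ℤ) (x : ℝ) (η : ℕ), 1 ≤ η → η ≤ q →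
      fmL L m ((η : ℝ) * L - x) = fmL L (-m + 1 + (p : ℤ)) (((q - η + 1 : ℕ) : ℝ) * L + x) := by
  intro m x η hη1 hη2
  have hq' : (q : ℝ) ≠ 0 := Nat.cast_ne_zero.mpr hq.ne'
  have hqL : (q : ℝ) * L = p := by rw [hL]; field_simp
  have hcast : ((q - η + 1 : ℕ) : ℝ) = (q : ℝ) - η + 1 := by
    push_cast [hη2]; ring
  simp only [fmL, hcast]
  set a : ℝ := (η : ℝ) * L - x - (m : ℤ) with ha
  set y : ℝ := ((q : ℝ) - η + 1) * L + x with hy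
  set M : ℝ := ((-m + 1 + (p : ℤ) : ℤ) : ℝ) with hM
  have hMv : M = -(m : ℝ) + 1 + p := by rw [hM]; push_cast; ring
  have e1 : |y - M + 1| = |a - L| := by
    apply habs_neg; rw [hMv, ha, hy]; push_cast; linear_combination hqL
  have e2 : |y - M - L| = |a + 1| := by
    apply habs_neg; rw [hMv, ha, hy]; push_cast; linear_combination hqL
  have e3 : |y - M| = |a + 1 - L| := by
    apply habs_neg; rw [hMv, ha, hy]; push_cast; linear_combination hqL
  have e4 : |y - M + 1 - L| = |a| := by
    apply habs_neg; rw [hMv, ha, hy]; push_cast; linear_combination hqL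
  rw [e1, e2, e3, e4]
  ring
end

section
/- For every $L > 0$, the family $(f_{m,L}(x))_{m \in \mathbb{Z}}$ is summable for every $x \in \mathbb{R}$, and the symmetric partial sums $\sum_{|m| \le N} f_{m,L}$ converge uniformly on $[0,1]$ to $f_L$ as $N \to \infty$. -/
open Filter MeasureTheory

lemma cube_rpow_third (x : ℝ) (hx : 0 ≤ x) : (x ^ ((1:ℝ)/3)) ^ (3:ℕ) = x := by
  rw [← Real.rpow_natCast (x ^ ((1:ℝ)/3)) 3, ← Real.rpow_mul hx]
  norm_num

lemma rpow_third_add_one_le (a : ℝ) (ha : 0 ≤ a) :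
    (a+1) ^ ((1:ℝ)/3) ≤ a ^ ((1:ℝ)/3) + 1 := by
  have h1 : 0 ≤ a ^ ((1:ℝ)/3) := Real.rpow_nonneg ha _
  have h2 : a + 1 ≤ (a ^ ((1:ℝ)/3) + 1)^(3:ℕ) := by
    have h3 := cube_rpow_third a ha
    nlinarith [sq_nonneg (a ^ ((1:ℝ)/3))]
  calc (a+1)^((1:ℝ)/3) ≤ ((a ^ ((1:ℝ)/3)+1)^(3:ℕ))^((1:ℝ)/3) :=
        Real.rpow_le_rpow (by linarith) h2 (by norm_num)
    _ = a ^ ((1:ℝ)/3) + 1 := by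
        rw [← Real.rpow_natCast (a ^ ((1:ℝ)/3) + 1) 3, ← Real.rpow_mul (by positivity)]
        norm_num

lemma diff_third_le_one {p q : ℝ} (hp : 0 ≤ p) (hq : 0 ≤ q) (h : q ≤ p + 1) :
    q ^ ((1:ℝ)/3) - p ^ ((1:ℝ)/3) ≤ 1 := by
  have := Real.rpow_le_rpow hq h (by norm_num : (0:ℝ) ≤ 1/3)
  have := rpow_third_add_one_le p hp
  linarith

lemma abs_diff_third_le_one {p q : ℝ} (hp : 0 ≤ p) (hq : 0 ≤ q) (h : |p - q| ≤ 1) :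
    |p ^ ((1:ℝ)/3) - q ^ ((1:ℝ)/3)| ≤ 1 := by
  rw [abs_le] at h ⊢
  constructor
  · have := diff_third_le_one hp hq (by linarith)
    linarith
  · have := diff_third_le_one hq hp (by linarith)
    linarith

lemma keyAux {c p q : ℝ} (hc : 0 < c) (hq : c ≤ q) (hqp : q ≤ p) (h1 : p - q ≤ 1) :
    p ^ ((1:ℝ)/3) - q ^ ((1:ℝ)/3) ≤ 1 / c ^ ((2:ℝ)/3) := by
  have hq0 : 0 < q := lt_of_lt_of_le hc hq
  have hp0 : 0 < p := lt_of_lt_of_le hq0 hqp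
  have h2 : q ^ ((2:ℝ)/3) * q ^ ((1:ℝ)/3) = q := by
    rw [← Real.rpow_add hq0]; norm_num
  have h3 : p ^ ((2:ℝ)/3) * p ^ ((1:ℝ)/3) = p := by
    rw [← Real.rpow_add hp0]; norm_num
  have h4 : q ^ ((2:ℝ)/3) * p ^ ((1:ℝ)/3) ≤ p ^ ((2:ℝ)/3) * p ^ ((1:ℝ)/3) :=
    mul_le_mul_of_nonneg_right (Real.rpow_le_rpow hq0.le hqp (by norm_num))
      (Real.rpow_nonneg hp0.le _)
  have hkey : p ^ ((1:ℝ)/3) - q ^ ((1:ℝ)/3) ≤ (p - q) / q ^ ((2:ℝ)/3) := by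
    rw [le_div_iff₀ (by positivity)]
    nlinarith
  have h5 : (p - q) / q ^ ((2:ℝ)/3) ≤ 1 / c ^ ((2:ℝ)/3) := by
    apply div_le_div₀ zero_le_one h1 (by positivity)
    exact Real.rpow_le_rpow hc.le hq (by norm_num)
  linarith

lemma keyA {t c : ℝ} (hc : 0 < c) (h1 : c ≤ |t|) (h2 : c ≤ |t+1|) :
    abs (|t+1| ^ ((1:ℝ)/3) - |t| ^ ((1:ℝ)/3)) ≤ 1 / c ^ ((2:ℝ)/3) := by
  have habs : abs (|t+1| - |t|) ≤ 1 := by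
    have := abs_abs_sub_abs_le_abs_sub (t+1) t
    simpa using this
  rcases le_total |t| |t+1| with h | h
  · rw [abs_of_nonneg (sub_nonneg.2 (Real.rpow_le_rpow (abs_nonneg t) h (by norm_num)))]
    exact keyAux hc h1 h (by rw [abs_le] at habs; linarith)
  · rw [abs_of_nonpos (sub_nonpos.2 (Real.rpow_le_rpow (abs_nonneg (t+1)) h (by norm_num))),
      neg_sub]
    exact keyAux hc h2 h (by rw [abs_le] at habs; linarith)

/-- The summable majorant. -/
noncomputable def uB (M : ℤ) : ℤ → ℝ := fun m => 8 / ((max 1 (|m| - M) : ℤ) : ℝ)^2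

lemma fmL_bound {L : ℝ} (hL : 0 < L) {M : ℤ} (hM : L + 2 ≤ M) (m : ℤ) {x : ℝ}
    (hx : x ∈ Set.Icc (0:ℝ) 1) : |fmL L m x| ≤ uB M m := by
  obtain ⟨hx0, hx1⟩ := hx
  set t : ℝ := x - m with ht
  set A : ℝ := |t+1| ^ ((1:ℝ)/3) - |t| ^ ((1:ℝ)/3) with hA
  set B : ℝ := |t+1-L| ^ ((1:ℝ)/3) - |t-L| ^ ((1:ℝ)/3) with hB
  have hfm : fmL L m x = (A - B)^3 := by
    rw [fmL, hA, hB, ht]; ring_nf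
  have habsfm : |fmL L m x| = |A - B|^3 := by rw [hfm, abs_pow, pow_succ, pow_two]
  have hM0 : (2:ℤ) ≤ M := by exact_mod_cast (by linarith : (2:ℝ) ≤ (M:ℝ))
  have key : ∀ D : ℝ, 0 ≤ D → |A - B| ≤ D → |fmL L m x| ≤ D^3 := by
    intro D hD hAB
    rw [habsfm]
    exact pow_le_pow_left₀ (abs_nonneg _) hAB 3
  rcases le_or_gt (|m|) M with hm | hm
  · -- small m : bound by 8
    have hmax : max 1 (|m| - M) = 1 := max_eq_left (by omega)
    have hA1 : |A| ≤ 1 := abs_diff_third_le_one (abs_nonneg _) (abs_nonneg _)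
      (by have := abs_abs_sub_abs_le_abs_sub (t+1) t; simpa using this)
    have hB1 : |B| ≤ 1 := abs_diff_third_le_one (abs_nonneg _) (abs_nonneg _)
      (by have := abs_abs_sub_abs_le_abs_sub (t+1-L) (t-L); simpa using this)
    have := key 2 (by norm_num) (by
      calc |A - B| ≤ |A| + |B| := abs_sub _ _
        _ ≤ 2 := by linarith)
    rw [uB, hmax]
    norm_num at this ⊢
    linarith
  · -- large m
    set c : ℤ := |m| - M with hc
    have hc1 : (1:ℤ) ≤ c := by omega
    have hmax : max 1 (|m| - M) = c := max_eq_right (by omega)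
    have hcR : (0:ℝ) < (c:ℝ) := by exact_mod_cast (by omega : (0:ℤ) < c)
    have habs : (c:ℝ) ≤ |t| ∧ (c:ℝ) ≤ |t+1| ∧ (c:ℝ) ≤ |t-L| ∧ (c:ℝ) ≤ |t+1-L| := by
      have hMR : L + 2 ≤ (M:ℝ) := hM
      rcases le_or_gt 0 m with hm0 | hm0
      · have hmM : M < m := by rw [abs_of_nonneg hm0] at hm; exact hm
        have hcR' : (c:ℝ) = (m:ℝ) - M := by rw [hc, abs_of_nonneg hm0]; push_cast; ring
        have hmR : (M:ℝ) < (m:ℝ) := by exact_mod_cast hmM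
        have h1 : t + 1 - L ≤ t + 1 := by linarith
        have h2 : t ≤ t + 1 := by linarith
        have h3 : t - L ≤ t := by linarith
        have h4 : t + 1 ≤ -(c:ℝ) := by rw [hcR', ht]; linarith
        refine ⟨?_, ?_, ?_, ?_⟩ <;> rw [le_abs] <;> right <;> linarith
      · have hmM : m < -M := by rw [abs_of_neg hm0] at hm; omega
        have hcR' : (c:ℝ) = -(m:ℝ) - M := by rw [hc, abs_of_neg hm0]; push_cast; ring
        have hmR : (m:ℝ) < -(M:ℝ) := by exact_mod_cast hmM
        have h4 : (c:ℝ) ≤ t - L := by rw [hcR', ht]; linarith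
        refine ⟨?_, ?_, ?_, ?_⟩ <;> rw [le_abs] <;> left <;> linarith
    obtain ⟨ha1, ha2, ha3, ha4⟩ := habs
    have hAc : |A| ≤ 1 / (c:ℝ) ^ ((2:ℝ)/3) := keyA hcR ha1 ha2
    have hBc : |B| ≤ 1 / (c:ℝ) ^ ((2:ℝ)/3) := by
      have := keyA (t := t - L) hcR ha3 (by rw [(by ring : t - L + 1 = t + 1 - L)]; exact ha4)
      rw [(by ring : t - L + 1 = t + 1 - L)] at this
      exact this
    have hD : |A - B| ≤ 2 / (c:ℝ) ^ ((2:ℝ)/3) := by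
      calc |A - B| ≤ |A| + |B| := abs_sub _ _
        _ ≤ 2 / (c:ℝ) ^ ((2:ℝ)/3) := by
            have : 2 / (c:ℝ) ^ ((2:ℝ)/3) = 1 / (c:ℝ) ^ ((2:ℝ)/3) + 1 / (c:ℝ) ^ ((2:ℝ)/3) := by
              ring
            rw [this]; linarith
    have hcube : (2 / (c:ℝ) ^ ((2:ℝ)/3))^3 = 8 / (c:ℝ)^2 := by
      have hc23 : ((c:ℝ) ^ ((2:ℝ)/3)) ^ (3:ℕ) = (c:ℝ)^2 := by
        rw [← Real.rpow_natCast ((c:ℝ) ^ ((2:ℝ)/3)) 3, ← Real.rpow_mul hcR.le,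
          (by norm_num : ((2:ℝ)/3) * (3:ℕ) = ((2:ℕ):ℝ)), Real.rpow_natCast]
      rw [div_pow, hc23]; norm_num
    have := key _ (by positivity) hD
    rw [uB, hmax]
    rw [hcube] at this
    exact this

lemma uB_summable_nat (M : ℤ) (hM : 0 ≤ M) :
    Summable fun n : ℕ => 8 / ((max 1 ((n:ℤ) - M) : ℤ) : ℝ)^2 := by
  have hsum : Summable fun n : ℕ => 8 * ((M:ℝ)+2)^2 * (1 / ((n:ℝ)+1)^2) := by
    apply Summable.mul_left
    have := (summable_nat_add_iff (f := fun n : ℕ => 1 / ((n:ℝ))^2) 1).2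
      (Real.summable_one_div_nat_pow.2 one_lt_two)
    simpa using this
  apply Summable.of_nonneg_of_le (fun n => by positivity) _ hsum
  intro n
  set v : ℤ := max 1 ((n:ℤ) - M) with hv
  have hv1 : (1:ℤ) ≤ v := le_max_left _ _
  have hkey : (n:ℤ) + 1 ≤ (M + 2) * v := by
    rcases le_or_gt ((n:ℤ)) (M+1) with h | h
    · nlinarith [le_max_left (1:ℤ) ((n:ℤ) - M)]
    · have hv2 : v = (n:ℤ) - M := max_eq_right (by omega)
      nlinarith
  have hvR : (1:ℝ) ≤ (v:ℝ) := by exact_mod_cast hv1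
  have hkeyR : (n:ℝ) + 1 ≤ ((M:ℝ) + 2) * (v:ℝ) := by exact_mod_cast hkey
  have h2 : 8 * ((M:ℝ)+2)^2 * (1 / ((n:ℝ)+1)^2) = 8 * ((M:ℝ)+2)^2 / ((n:ℝ)+1)^2 := by
    ring
  rw [h2, div_le_div_iff₀ (by positivity) (by positivity)]
  nlinarith [pow_le_pow_left₀ (by positivity : (0:ℝ) ≤ (n:ℝ)+1) hkeyR 2]

lemma uB_summable (M : ℤ) (hM : 0 ≤ M) : Summable (uB M) := by
  apply Summable.of_nat_of_neg
  · exact (uB_summable_nat M hM).congr (fun n => by simp [uB])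
  · exact (uB_summable_nat M hM).congr (fun n => by simp [uB, abs_neg])

/-- For every `L > 0`, the family `(f_{m,L}(x))_{m ∈ ℤ}` is summable for every `x`, and
the symmetric partial sums `∑_{|m| ≤ N} f_{m,L}` converge uniformly on `[0,1]` to `f_L`. -/
theorem fL_summable_and_uniform (L : ℝ) (hL : 0 < L) :
    (∀ x : ℝ, Summable fun m : ℤ => fmL L m x) ∧
    TendstoUniformlyOn
      (fun (N : ℕ) (x : ℝ) => ∑ m ∈ Finset.Icc (-(N : ℤ)) (N : ℤ), fmL L m x)
      (fL L) atTop (Set.Icc 0 1) := by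
  set M : ℤ := ⌈L⌉ + 2 with hMdef
  have hM : L + 2 ≤ (M:ℝ) := by
    have := Int.le_ceil L
    rw [hMdef]
    push_cast
    linarith
  have hM0 : (0:ℤ) ≤ M := by
    have : (0:ℤ) ≤ ⌈L⌉ := Int.ceil_nonneg hL.le
    omega
  have hu := uB_summable M hM0
  -- summability on [0,1]
  have hsumIcc : ∀ x ∈ Set.Icc (0:ℝ) 1, Summable fun m : ℤ => fmL L m x := by
    intro x hx
    apply Summable.of_abs
    exact Summable.of_nonneg_of_le (fun m => abs_nonneg _) (fun m => fmL_bound hL hM m hx) hu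
  constructor
  · -- summability everywhere, by translation
    intro x
    set k : ℤ := ⌊x⌋ with hk
    have hx' : Int.fract x ∈ Set.Icc (0:ℝ) 1 :=
      ⟨Int.fract_nonneg x, (Int.fract_lt_one x).le⟩
    have hs := hsumIcc _ hx'
    have heq : (fun m : ℤ => fmL L m (Int.fract x)) =
        (fun m : ℤ => fmL L m x) ∘ (Equiv.addRight k) := by
      funext m
      simp only [Function.comp_apply, Equiv.coe_addRight, fmL, Int.fract]
      push_cast
      rw [← hk]
      ring_nf
    rw [heq] at hs
    exact (Equiv.addRight k).summable_iff.mp hs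
  · -- uniform convergence
    have hbound : ∀ (m : ℤ) (x : ℝ), x ∈ Set.Icc (0:ℝ) 1 → ‖fmL L m x‖ ≤ uB M m := by
      intro m x hx
      rw [Real.norm_eq_abs]
      exact fmL_bound hL hM m hx
    have H := tendstoUniformlyOn_tsum hu hbound
    have hg : Tendsto (fun N : ℕ => Finset.Icc (-(N:ℤ)) (N:ℤ)) atTop atTop := by
      apply tendsto_atTop_finset_of_monotone
      · intro a b hab
        apply Finset.Icc_subset_Icc
        · exact neg_le_neg (by exact_mod_cast hab)
        · exact_mod_cast hab
      · intro m
        exact ⟨m.natAbs, by rw [Finset.mem_Icc]; omega⟩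
    intro v hv
    exact hg.eventually (H v hv)
end

section
/- For every $L > 0$ and every $m \in \mathbb{Z}$, the function $f_{m,L}$ is H\"older continuous of order $1/3$ on $\mathbb{R}$: there exists a constant $C > 0$ such that $|f_{m,L}(x) - f_{m,L}(y)| \le C |x - y|^{1/3}$ for all $x, y \in \mathbb{R}$. -/
open Filter MeasureTheory

lemma add_rpow_third_le (a b : ℝ) (ha : 0 ≤ a) (hb : 0 ≤ b) :
    (a + b) ^ ((1:ℝ)/3) ≤ a ^ ((1:ℝ)/3) + b ^ ((1:ℝ)/3) := by
  have h := NNReal.rpow_add_le_add_rpow a.toNNReal b.toNNReal (by norm_num : (0:ℝ) ≤ 1/3)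
    (by norm_num : (1:ℝ)/3 ≤ 1)
  have h2 := NNReal.coe_le_coe.2 h
  simp only [NNReal.coe_rpow, NNReal.coe_add, Real.coe_toNNReal _ ha,
    Real.coe_toNNReal _ hb] at h2
  exact h2

lemma abs_rpow_third_sub (a b : ℝ) :
    |(|a| ^ ((1:ℝ)/3)) - |b| ^ ((1:ℝ)/3)| ≤ |a - b| ^ ((1:ℝ)/3) := by
  wlog h : |b| ≤ |a| generalizing a b
  · rw [abs_sub_comm, abs_sub_comm a b]; exact this b a (le_of_not_ge h)
  have h1 : |a| ≤ |b| + |a - b| := by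
    have := abs_sub_abs_le_abs_sub a b; linarith
  have h2 : |a| ^ ((1:ℝ)/3) ≤ |b| ^ ((1:ℝ)/3) + |a - b| ^ ((1:ℝ)/3) :=
    le_trans (by gcongr) (add_rpow_third_le _ _ (abs_nonneg _) (abs_nonneg _))
  rw [abs_of_nonneg (sub_nonneg.2 (Real.rpow_le_rpow (abs_nonneg _) h (by norm_num)))]
  linarith

/-- For every `L > 0` and `m ∈ ℤ`, the function `f_{m,L}` is Hölder continuous of order `1/3`
on `ℝ`. -/
theorem fmL_holder (L : ℝ) (hL : 0 < L) (m : ℤ) :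
    ∃ C : ℝ, 0 < C ∧ ∀ x y : ℝ,
      |fmL L m x - fmL L m y| ≤ C * |x - y| ^ ((1 : ℝ) / 3) := by
  set g : ℝ → ℝ := fun x =>
    |x - m + 1| ^ ((1 : ℝ) / 3) + |x - m - L| ^ ((1 : ℝ) / 3)
      - |x - m| ^ ((1 : ℝ) / 3) - |x - m + 1 - L| ^ ((1 : ℝ) / 3) with hg
  have hgb : ∀ x : ℝ, |g x| ≤ 2 := by
    intro x
    have h1 := abs_rpow_third_sub (x - m + 1) (x - m)
    have h2 := abs_rpow_third_sub (x - m - L) (x - m + 1 - L)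
    have d1 : (x - m + 1) - (x - m : ℝ) = 1 := by ring
    have d2 : (x - m - L) - (x - m + 1 - L) = -1 := by ring
    rw [d1] at h1; rw [d2] at h2
    simp only [abs_one, abs_neg, Real.one_rpow] at h1 h2
    have e : g x = (|x - m + 1| ^ ((1:ℝ)/3) - |x - m| ^ ((1:ℝ)/3))
        + (|x - m - L| ^ ((1:ℝ)/3) - |x - m + 1 - L| ^ ((1:ℝ)/3)) := by rw [hg]; ring
    obtain ⟨a1, a2⟩ := abs_le.mp h1
    obtain ⟨b1, b2⟩ := abs_le.mp h2
    rw [e, abs_le]; constructor <;> linarith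
  have hgh : ∀ x y : ℝ, |g x - g y| ≤ 4 * |x - y| ^ ((1:ℝ)/3) := by
    intro x y
    have e1 := abs_rpow_third_sub (x - m + 1) (y - m + 1)
    have e2 := abs_rpow_third_sub (x - m - L) (y - m - L)
    have e3 := abs_rpow_third_sub (x - m) (y - m)
    have e4 := abs_rpow_third_sub (x - m + 1 - L) (y - m + 1 - L)
    have d1 : (x - m + 1) - (y - m + 1) = x - y := by ring
    have d2 : (x - m - L) - (y - m - L) = x - y := by ring
    have d3 : (x - m) - (y - m : ℝ) = x - y := by ring
    have d4 : (x - m + 1 - L) - (y - m + 1 - L) = x - y := by ring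
    rw [d1] at e1; rw [d2] at e2; rw [d3] at e3; rw [d4] at e4
    have e : g x - g y = (|x - m + 1| ^ ((1:ℝ)/3) - |y - m + 1| ^ ((1:ℝ)/3))
        + (|x - m - L| ^ ((1:ℝ)/3) - |y - m - L| ^ ((1:ℝ)/3))
        - (|x - m| ^ ((1:ℝ)/3) - |y - m| ^ ((1:ℝ)/3))
        - (|x - m + 1 - L| ^ ((1:ℝ)/3) - |y - m + 1 - L| ^ ((1:ℝ)/3)) := by rw [hg]; ring
    obtain ⟨a1, a2⟩ := abs_le.mp e1
    obtain ⟨b1, b2⟩ := abs_le.mp e2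
    obtain ⟨c1, c2⟩ := abs_le.mp e3
    obtain ⟨f1, f2⟩ := abs_le.mp e4
    rw [e, abs_le]; constructor <;> linarith
  refine ⟨48, by norm_num, fun x y => ?_⟩
  have hf : fmL L m x - fmL L m y
      = (g x - g y) * ((g x)^2 + g x * g y + (g y)^2) := by
    simp only [fmL, hg]; ring
  rw [hf, abs_mul]
  have hb : |(g x)^2 + g x * g y + (g y)^2| ≤ 12 := by
    have hx := hgb x; have hy := hgb y
    have hx' := abs_nonneg (g x); have hy' := abs_nonneg (g y)
    have h1 : |(g x)^2| ≤ 4 := by rw [abs_pow]; nlinarith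
    have h2 : |(g y)^2| ≤ 4 := by rw [abs_pow]; nlinarith
    have h3 : |g x * g y| ≤ 4 := by rw [abs_mul]; nlinarith
    obtain ⟨a1, a2⟩ := abs_le.mp h1
    obtain ⟨b1, b2⟩ := abs_le.mp h2
    obtain ⟨c1, c2⟩ := abs_le.mp h3
    have s1 : |(g x)^2 + g x * g y + (g y)^2| ≤ |(g x)^2| + |g x * g y| + |(g y)^2| :=
      (abs_add_le _ _).trans (by gcongr; exact abs_add_le _ _)
    linarith
  calc |g x - g y| * |(g x)^2 + g x * g y + (g y)^2|
      ≤ (4 * |x - y| ^ ((1:ℝ)/3)) * 12 :=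
        mul_le_mul (hgh x y) hb (abs_nonneg _) (by positivity)
    _ = 48 * |x - y| ^ ((1:ℝ)/3) := by ring
end

section
/- Let $(a_n)$ and $(b_n)$ be strictly increasing sequences of positive integers, let $L = p/q$ with $p, q \in \mathbb{N}$ relatively prime, set $L_n = b_n/a_n$ and $\delta_n = L_n - L$, and suppose $L_n \ne L$ for all but finitely many $n$ and $c_n = \gcd(a_n, b_n) \to \infty$. Then $a_n |\delta_n| \to \infty$ as $n \to \infty$. -/
open Filter

/-- For strictly increasing sequences of positive integers `(a_n)`, `(b_n)` and `L = p/q`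
in lowest terms, with `L_n = b_n/a_n` and `δ_n = L_n - L`: if `L_n ≠ L` for all but finitely
many `n` and `c_n = gcd(a_n, b_n) → ∞`, then `a_n|δ_n| → ∞`. -/
theorem an_deltan_tendsto_atTop (a b : ℕ → ℕ) (ha : StrictMono a) (hb : StrictMono b)
    (ha0 : ∀ n, 0 < a n) (hb0 : ∀ n, 0 < b n)
    (p q : ℕ) (hp : 0 < p) (hq : 0 < q) (hpq : Nat.Coprime p q)
    (L : ℝ) (hL : L = (p : ℝ) / (q : ℝ))
    (hne : ∀ᶠ n in atTop, (b n : ℝ) / (a n : ℝ) ≠ L)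
    (hgcd : Tendsto (fun n => Nat.gcd (a n) (b n)) atTop atTop) :
    Tendsto (fun n => (a n : ℝ) * |(b n : ℝ) / (a n : ℝ) - L|) atTop atTop := by
  have hq' : (0:ℝ) < q := by positivity
  have hlow : Tendsto (fun n => (Nat.gcd (a n) (b n) : ℝ) / q) atTop atTop :=
    (tendsto_natCast_atTop_atTop.comp hgcd).atTop_div_const hq'
  refine tendsto_atTop_mono' atTop ?_ hlow
  filter_upwards [hne] with n hn
  have ha' : (0:ℝ) < a n := by exact_mod_cast ha0 n
  set c := Nat.gcd (a n) (b n) with hc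
  have hd : (c : ℤ) ∣ ((q : ℤ) * b n - (p : ℤ) * a n) := by
    refine dvd_sub ?_ ?_
    · exact Dvd.dvd.mul_left (Int.natCast_dvd_natCast.mpr (Nat.gcd_dvd_right _ _)) _
    · exact Dvd.dvd.mul_left (Int.natCast_dvd_natCast.mpr (Nat.gcd_dvd_left _ _)) _
  have hd0 : ((q : ℤ) * b n - (p : ℤ) * a n) ≠ 0 := by
    intro h
    apply hn
    rw [hL]
    have h' : (q : ℤ) * b n = (p : ℤ) * a n := by linarith [sub_eq_zero.mp h]
    have h'' : (q : ℝ) * b n = (p : ℝ) * a n := by exact_mod_cast h'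
    field_simp
    linarith
  have hle : (c : ℤ) ≤ |(q : ℤ) * b n - (p : ℤ) * a n| :=
    Int.le_of_dvd (abs_pos.mpr hd0) (hd.trans (self_dvd_abs _))
  have hleR : (c : ℝ) ≤ |(q : ℝ) * b n - (p : ℝ) * a n| := by exact_mod_cast hle
  have heq : (a n : ℝ) * |(b n : ℝ) / (a n : ℝ) - L| =
      |(q : ℝ) * b n - (p : ℝ) * a n| / q := by
    rw [hL]
    have h1 : (a n : ℝ) * |(b n : ℝ) / (a n : ℝ) - (p : ℝ) / q| =
        |(a n : ℝ) * ((b n : ℝ) / (a n : ℝ) - (p : ℝ) / q)| := by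
      rw [abs_mul, abs_of_pos ha']
    have : (a n : ℝ) * ((b n : ℝ) / (a n : ℝ) - (p : ℝ) / q) =
        ((q : ℝ) * b n - (p : ℝ) * a n) / q := by
      field_simp
    rw [h1, this, abs_div, abs_of_pos hq']
  rw [heq]
  gcongr
end

section
/- Let $(a_n)$ and $(b_n)$ be strictly increasing sequences of positive integers such that $L_n = b_n/a_n \to L \in (0, \infty)$, and suppose there exists $k \in \mathbb{N}$ such that $b_n \equiv k \pmod{a_n}$ for all $n$. Then $L \in \mathbb{N}$, and $|b_n - a_n L| = k$ for all but finitely many $n$. -/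
open Filter

/-- If `(a_n)`, `(b_n)` are strictly increasing sequences of positive integers with
`L_n = b_n/a_n → L ∈ (0,∞)`, and `b_n ≡ k (mod a_n)` for all `n`, then `L ∈ ℕ` and
`|b_n - a_n L| = k` for all but finitely many `n`. -/
theorem mod_case_L_nat (a b : ℕ → ℕ) (ha : StrictMono a) (hb : StrictMono b)
    (ha0 : ∀ n, 0 < a n) (hb0 : ∀ n, 0 < b n)
    (L : ℝ) (hLpos : 0 < L)
    (hconv : Tendsto (fun n => (b n : ℝ) / (a n : ℝ)) atTop (nhds L))
    (k : ℕ) (hk : ∀ n, b n % a n = k) :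
    (∃ M : ℕ, L = (M : ℝ)) ∧
      (∀ᶠ n in atTop, |(b n : ℝ) - (a n : ℝ) * L| = (k : ℝ)) := by
  set q : ℕ → ℕ := fun n => b n / a n with hqdef
  have hbn : ∀ n, b n = a n * q n + k := by
    intro n
    conv_lhs => rw [← Nat.div_add_mod (b n) (a n)]
    rw [hk]
  -- a n → ∞
  have haT : Tendsto (fun n => (a n : ℝ)) atTop atTop := by
    apply tendsto_natCast_atTop_atTop.comp
    exact tendsto_atTop_mono (fun n => ha.le_apply) tendsto_id
  -- q n → L
  have hqconv : Tendsto (fun n => (q n : ℝ)) atTop (nhds L) := by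
    have h1 : Tendsto (fun n => (b n : ℝ) / a n - (k : ℝ) / a n) atTop (nhds (L - 0)) :=
      hconv.sub (tendsto_const_nhds.div_atTop haT)
    rw [sub_zero] at h1
    refine h1.congr (fun n => ?_)
    have hapos : (0 : ℝ) < (a n : ℝ) := by exact_mod_cast ha0 n
    field_simp
    have := hbn n
    push_cast [this]
    ring
  -- eventually |q n - L| < 1/2
  have hqe : ∀ᶠ n in atTop, |(q n : ℝ) - L| < 1/2 := by
    have := Metric.tendsto_atTop.mp hqconv (1/2) (by norm_num)
    obtain ⟨N, hN⟩ := this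
    exact eventually_atTop.mpr ⟨N, fun n hn => by simpa [Real.dist_eq] using hN n hn⟩
  obtain ⟨N, hN⟩ := eventually_atTop.mp hqe
  set M := q N with hM
  have hqM : ∀ n ≥ N, q n = M := by
    intro n hn
    have h1 := hN n hn
    have h2 := hN N le_rfl
    have h3 : |(q n : ℝ) - (q N : ℝ)| < 1 := by
      have h := abs_sub_le ((q n : ℝ)) L ((q N : ℝ))
      rw [abs_sub_comm L ((q N : ℝ))] at h
      linarith
    have h4 : |((q n : ℤ) : ℝ) - ((q N : ℤ) : ℝ)| < 1 := by push_cast; exact_mod_cast h3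
    rw [← Int.cast_sub, ← Int.cast_abs] at h4
    have h5 : |(q n : ℤ) - (q N : ℤ)| < 1 := by exact_mod_cast h4
    have h6 : (q n : ℤ) = (q N : ℤ) := by rw [abs_lt] at h5; omega
    exact_mod_cast h6
  have hLM : L = (M : ℝ) := by
    have hconst : Tendsto (fun n => (q n : ℝ)) atTop (nhds (M : ℝ)) := by
      refine Tendsto.congr' ?_ tendsto_const_nhds
      exact eventually_atTop.mpr ⟨N, fun n hn => (by rw [hqM n hn] : ((M:ℕ):ℝ) = (q n : ℝ)).symm ▸ rfl⟩
    exact tendsto_nhds_unique hqconv hconst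
  refine ⟨⟨M, hLM⟩, eventually_atTop.mpr ⟨N, fun n hn => ?_⟩⟩
  have hb' := hbn n
  rw [hqM n hn] at hb'
  rw [hLM, hb']
  push_cast
  rw [show ((a n : ℝ) * M + k) - (a n : ℝ) * M = (k : ℝ) by ring]
  exact abs_of_nonneg (by positivity)
end

section
/- Let $(a_n)$ and $(b_n)$ be strictly increasing sequences of positive integers with $L_n = b_n/a_n \to L = p/q$, where $p, q \in \mathbb{N}$ are relatively prime, and set $\delta_n = L_n - L$. Suppose $\delta_n \ne 0$ for all sufficiently large $n$ and $a_n |\delta_n| \to k$, where $k \in (0, \infty)$ or $k = \infty$. Then for every $m \in \mathbb{Z}$ and every $t > 0$, the difference $\frac{1}{a_n} \sum_{j=1}^{\lfloor a_n t \rfloor} \widehat{f}_{m,L}(j L_n) \; - \; \frac{1}{q} \sum_{\eta=1}^{q} \frac{1}{a_n |\delta_n|} \int_0^{a_n |\delta_n| t} \widehat{f}_{m,L}(\eta L + \operatorname{sgn}(\delta_n) x)\, dx$ converges to $0$ as $n \to \infty$. -/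
set_option maxHeartbeats 1000000


open Filter MeasureTheory

/-- `f̂_{m,L}(x) = f_{m,L}({x})`, where `{x}` is the fractional part of `x`. -/
noncomputable def fmLhat (L : ℝ) (m : ℤ) (x : ℝ) : ℝ := fmL L m (Int.fract x)

lemma fmL_continuous (L : ℝ) (m : ℤ) : Continuous (fmL L m) := by
  unfold fmL
  apply Continuous.pow
  apply Continuous.sub
  apply Continuous.sub
  apply Continuous.add
  all_goals
    exact Continuous.rpow_const (by continuity) (fun x => Or.inr (by norm_num))

lemma fmLhat_measurable (L : ℝ) (m : ℤ) : Measurable (fmLhat L m) :=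
  (fmL_continuous L m).measurable.comp measurable_fract

lemma fmLhat_periodic (L : ℝ) (m : ℤ) (x : ℝ) (k : ℤ) :
    fmLhat L m (x + k) = fmLhat L m x := by
  unfold fmLhat; rw [Int.fract_add_intCast]

lemma fmLhat_bound (L : ℝ) (m : ℤ) : ∃ M : ℝ, 0 ≤ M ∧ ∀ x, |fmLhat L m x| ≤ M := by
  obtain ⟨C, hC⟩ := (isCompact_Icc (a := (0:ℝ)) (b := 1)).exists_bound_of_continuousOn
    (fmL_continuous L m).continuousOn
  refine ⟨max C 0, le_max_right _ _, fun x => ?_⟩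
  have := hC (Int.fract x) ⟨Int.fract_nonneg x, (Int.fract_lt_one x).le⟩
  calc |fmLhat L m x| = ‖fmL L m (Int.fract x)‖ := rfl
    _ ≤ C := this
    _ ≤ max C 0 := le_max_left _ _

lemma fmL_unifcont (L : ℝ) (m : ℤ) {ε : ℝ} (hε : 0 < ε) :
    ∃ δ : ℝ, 0 < δ ∧ ∀ x ∈ Set.Icc (0:ℝ) 1, ∀ y ∈ Set.Icc (0:ℝ) 1,
      |x - y| ≤ δ → |fmL L m x - fmL L m y| ≤ ε := by
  have hu : UniformContinuousOn (fmL L m) (Set.Icc (0:ℝ) 1) :=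
    (isCompact_Icc).uniformContinuousOn_of_continuous (fmL_continuous L m).continuousOn
  rw [Metric.uniformContinuousOn_iff] at hu
  obtain ⟨δ, hδ, h⟩ := hu ε hε
  refine ⟨δ/2, by linarith, fun x hx y hy hxy => ?_⟩
  have := h x hx y hy (by rw [Real.dist_eq]; linarith)
  rw [Real.dist_eq] at this
  exact this.le

lemma count_bad (N : ℕ) (s A : ℝ) (hs : 0 < s) (lo : ℕ → ℝ)
    (hsep : ∀ r r', r < N → r' < N → r ≠ r' → s ≤ |lo r - lo r'|)
    (hsub : ∀ r, r < N → Set.Ioc (lo r) (lo r + s) ⊆ Set.Ioc A (A + N * s))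
    (bad : Finset ℕ)
    (hbadmem : ∀ r ∈ bad, r < N ∧ ∃ k : ℤ, (k : ℝ) ∈ Set.Ioc (lo r) (lo r + s)) :
    (bad.card : ℝ) ≤ N * s + 1 := by
  classical
  set F : ℕ → ℤ := fun r =>
    if h : ∃ k : ℤ, (k : ℝ) ∈ Set.Ioc (lo r) (lo r + s) then h.choose else 0 with hF
  have hmem : ∀ r ∈ bad, (F r : ℝ) ∈ Set.Ioc (lo r) (lo r + s) := by
    intro r hr
    have h := (hbadmem r hr).2
    simp only [hF, dif_pos h]
    exact h.choose_spec
  have hcard : bad.card ≤ (Finset.Ioc ⌊A⌋ ⌊A + N * s⌋).card := by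
    apply Finset.card_le_card_of_injOn F
    · intro r hr
      have h1 := hsub r (hbadmem r hr).1 (hmem r hr)
      exact Finset.mem_Ioc.mpr ⟨Int.floor_lt.mpr h1.1, Int.le_floor.mpr h1.2⟩
    · intro r hr r' hr' hFeq
      by_contra hne
      have h1 := hmem r hr
      have h2 := hmem r' hr'
      rw [hFeq] at h1
      have hlt : |lo r - lo r'| < s := by
        rw [abs_sub_lt_iff]
        exact ⟨by linarith [h1.1, h1.2, h2.1, h2.2], by linarith [h1.1, h1.2, h2.1, h2.2]⟩
      exact absurd hlt (not_lt.mpr (hsep r r' (hbadmem r hr).1 (hbadmem r' hr').1 hne))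
  have h2 : ((Finset.Ioc ⌊A⌋ ⌊A + N * s⌋).card : ℝ) ≤ N * s + 1 := by
    rw [Int.card_Ioc]
    rcases le_or_gt ⌊A⌋ ⌊A + N * s⌋ with h | h
    · have e : ((⌊A + N * s⌋ - ⌊A⌋).toNat : ℤ) = ⌊A + N * s⌋ - ⌊A⌋ :=
        Int.toNat_of_nonneg (by omega)
      have e2 : ((⌊A + N * s⌋ - ⌊A⌋).toNat : ℝ) = (⌊A + N * s⌋ : ℝ) - (⌊A⌋ : ℝ) := by
        exact_mod_cast congrArg (Int.cast : ℤ → ℝ) e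
      rw [e2]
      have := Int.floor_le (A + N * s)
      have := Int.lt_floor_add_one A
      linarith
    · rw [Int.toNat_of_nonpos (by omega)]
      simp only [Nat.cast_zero]
      positivity
  calc (bad.card : ℝ) ≤ ((Finset.Ioc ⌊A⌋ ⌊A + N * s⌋).card : ℝ) := by exact_mod_cast hcard
    _ ≤ N * s + 1 := h2

lemma bdd_intervalIntegrable (h : ℝ → ℝ) (hm : Measurable h) (M : ℝ)
    (hM : ∀ x, |h x| ≤ M) (u v : ℝ) : IntervalIntegrable h MeasureTheory.volume u v := by
  rw [intervalIntegrable_iff]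
  apply MeasureTheory.Integrable.mono' (g := fun _ => M)
    (integrableOn_const measure_Ioc_lt_top.ne)
    hm.aestronglyMeasurable.restrict
  exact Filter.Eventually.of_forall (fun x => hM x)

lemma riemann_cells (h : ℝ → ℝ) (hm : Measurable h) (M : ℝ) (hM : ∀ x, |h x| ≤ M)
    (c s : ℝ) (hs : 0 < s) (N : ℕ) (ε : ℝ) (hε : 0 ≤ ε) (bad : Finset ℕ)
    (hgood : ∀ r, r < N → r ∈ bad ∨
      ∀ x ∈ Set.Icc (c + r * s) (c + r * s + s), |h x - h (c + r * s)| ≤ ε) :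
    |s * ∑ r ∈ Finset.range N, h (c + r * s) - ∫ x in c..(c + N * s), h x|
      ≤ N * s * ε + bad.card * (2 * M) * s := by
  classical
  have hM0 : 0 ≤ M := le_trans (abs_nonneg _) (hM 0)
  set u : ℕ → ℝ := fun k => c + k * s with hu
  have hint : ∀ (a b : ℝ), IntervalIntegrable h MeasureTheory.volume a b :=
    bdd_intervalIntegrable h hm M hM
  have hsplit : ∑ k ∈ Finset.range N, (∫ x in u k..u (k+1), h x)
      = ∫ x in (u 0)..(u N), h x := by
    apply intervalIntegral.sum_integral_adjacent_intervals
    intro k _; exact hint _ _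
  have hu0 : u 0 = c := by simp [hu]
  have huN : u N = c + N * s := rfl
  have hiN : (∫ x in c..(c + N * s), h x) = ∫ x in (u 0)..(u N), h x := by rw [hu0]
  rw [hiN, ← hsplit, Finset.mul_sum, ← Finset.sum_sub_distrib]
  have keybound : ∀ r ∈ Finset.range N,
      |s * h (c + r * s) - ∫ x in (u r)..(u (r+1)), h x|
        ≤ (if r ∈ bad then 2 * M else ε) * s := by
    intro r hr
    have hrN := Finset.mem_range.mp hr
    have hlen : u (r+1) - u r = s := by simp [hu]; ring
    have hconst : s * h (c + r * s) = ∫ _x in (u r)..(u (r+1)), h (c + r * s) := by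
      rw [intervalIntegral.integral_const, hlen, smul_eq_mul]
    rw [hconst, ← intervalIntegral.integral_sub (intervalIntegrable_const) (hint _ _)]
    set C : ℝ := if r ∈ bad then 2 * M else ε with hC
    have hbd : ∀ x ∈ Set.uIoc (u r) (u (r+1)), ‖h (c + r * s) - h x‖ ≤ C := by
      intro x hx
      have hxm : x ∈ Set.Icc (c + r * s) (c + r * s + s) := by
        rw [Set.uIoc_of_le (by simp [hu]; nlinarith)] at hx
        have h1 := hx.1
        have h2 := hx.2
        simp only [hu] at h1 h2 ⊢
        constructor <;> [linarith; (push_cast at h2 ⊢; linarith)]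
      by_cases hb : r ∈ bad
      · rw [hC, if_pos hb, Real.norm_eq_abs]
        calc |h (c + r * s) - h x| ≤ |h (c + r * s)| + |h x| := abs_sub _ _
          _ ≤ M + M := add_le_add (hM _) (hM _)
          _ = 2 * M := by ring
      · rw [hC, if_neg hb, Real.norm_eq_abs, abs_sub_comm]
        exact (hgood r hrN).resolve_left hb x hxm
    calc |∫ x in (u r)..(u (r+1)), (h (c + r * s) - h x)|
        ≤ C * |u (r+1) - u r| := intervalIntegral.norm_integral_le_of_norm_le_const hbd
      _ = C * s := by rw [hlen, abs_of_pos hs]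
  calc |∑ r ∈ Finset.range N, (s * h (c + r * s) - ∫ x in (u r)..(u (r+1)), h x)|
      ≤ ∑ r ∈ Finset.range N, |s * h (c + r * s) - ∫ x in (u r)..(u (r+1)), h x| :=
        Finset.abs_sum_le_sum_abs _ _
    _ ≤ ∑ r ∈ Finset.range N, (if r ∈ bad then 2 * M else ε) * s :=
        Finset.sum_le_sum keybound
    _ ≤ N * s * ε + bad.card * (2 * M) * s := by
        rw [← Finset.sum_filter_add_sum_filter_not (Finset.range N) (· ∈ bad)]
        have e1 : ∑ r ∈ (Finset.range N).filter (· ∈ bad),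
            (if r ∈ bad then 2 * M else ε) * s
            = ((Finset.range N).filter (· ∈ bad)).card * (2 * M * s) := by
          rw [Finset.sum_congr rfl (fun r hr => by
            rw [if_pos (Finset.mem_filter.mp hr).2, mul_assoc]), Finset.sum_const,
            nsmul_eq_mul, mul_assoc]
        have e2 : ∑ r ∈ (Finset.range N).filter (¬ · ∈ bad),
            (if r ∈ bad then 2 * M else ε) * s
            = ((Finset.range N).filter (¬ · ∈ bad)).card * (ε * s) := by
          rw [Finset.sum_congr rfl (fun r hr => by
            rw [if_neg (Finset.mem_filter.mp hr).2]), Finset.sum_const, nsmul_eq_mul]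
        rw [e1, e2]
        have c1 : (((Finset.range N).filter (· ∈ bad)).card : ℝ) ≤ (bad.card : ℝ) := by
          exact_mod_cast Finset.card_le_card
            (fun x hx => (Finset.mem_filter.mp hx).2)
        have c2 : (((Finset.range N).filter (¬ · ∈ bad)).card : ℝ) ≤ (N : ℝ) := by
          exact_mod_cast Finset.card_le_card (Finset.filter_subset _ _) |>.trans
            (le_of_eq (Finset.card_range N))
        have hMs : 0 ≤ 2 * M * s := by positivity
        have hεs : 0 ≤ ε * s := by positivity
        nlinarith [mul_le_mul_of_nonneg_right c1 hMs, mul_le_mul_of_nonneg_right c2 hεs]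

/-- floor is constant on a cell with no integer in (lo, lo+s] -/
lemma floor_const_on_cell {lo s : ℝ} (hs : 0 < s)
    (hno : ¬ ∃ k : ℤ, (k : ℝ) ∈ Set.Ioc lo (lo + s))
    {y : ℝ} (hy : y ∈ Set.Icc lo (lo + s)) : ⌊y⌋ = ⌊lo + s⌋ := by
  by_contra hne
  have h2 : ⌊y⌋ < ⌊lo + s⌋ := lt_of_le_of_ne (Int.floor_le_floor hy.2) hne
  have hk : (⌊lo + s⌋ : ℝ) ≤ lo + s := Int.floor_le _
  have h3 : (⌊y⌋ : ℝ) + 1 ≤ (⌊lo + s⌋ : ℝ) := by exact_mod_cast h2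
  have hyk : y < (⌊lo + s⌋ : ℝ) := lt_of_lt_of_le (Int.lt_floor_add_one y) h3
  exact hno ⟨⌊lo + s⌋, lt_of_le_of_lt hy.1 hyk, hk⟩

lemma eta_estimate (L : ℝ) (m : ℤ) (M ε δ : ℝ)
    (hMb : ∀ x, |fmLhat L m x| ≤ M) (hε : 0 ≤ ε) (hδ : 0 < δ)
    (huc : ∀ x ∈ Set.Icc (0:ℝ) 1, ∀ y ∈ Set.Icc (0:ℝ) 1,
      |x - y| ≤ δ → |fmL L m x - fmL L m y| ≤ ε)
    (θ σ : ℝ) (hσ : σ = 1 ∨ σ = -1) (c s : ℝ) (hs : 0 < s) (hsδ : s ≤ δ) (N : ℕ) :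
    |s * ∑ r ∈ Finset.range N, fmLhat L m (θ + σ * (c + r * s))
      - ∫ x in c..(c + N * s), fmLhat L m (θ + σ * x)|
      ≤ N * s * ε + (N * s + 1) * (2 * M) * s := by
  classical
  have hσabs : |σ| = 1 := by rcases hσ with h1 | h1 <;> simp [h1]
  set h : ℝ → ℝ := fun x => fmLhat L m (θ + σ * x) with hh
  have hm : Measurable h :=
    (fmLhat_measurable L m).comp ((measurable_const.mul measurable_id).const_add θ)
  have hMh : ∀ x, |h x| ≤ M := fun x => hMb _
  set lo : ℕ → ℝ := fun r => θ + σ * (c + r * s) + (σ - 1) / 2 * s with hlo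
  set bad : Finset ℕ :=
    (Finset.range N).filter (fun r => ∃ k : ℤ, (k : ℝ) ∈ Set.Ioc (lo r) (lo r + s)) with hbad
  have himg : ∀ r : ℕ, ∀ y ∈ Set.Icc (c + r * s) (c + r * s + s),
      θ + σ * y ∈ Set.Icc (lo r) (lo r + s) := by
    intro r y hy
    obtain ⟨hy1, hy2⟩ := hy
    rcases hσ with h1 | h1 <;> subst h1 <;> simp only [hlo] <;> constructor <;>
      · norm_num; try linarith
  have hgood : ∀ r, r < N → r ∈ bad ∨
      ∀ x ∈ Set.Icc (c + r * s) (c + r * s + s), |h x - h (c + r * s)| ≤ ε := by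
    intro r hrN
    by_cases hb : r ∈ bad
    · exact Or.inl hb
    right
    have hno : ¬ ∃ k : ℤ, (k : ℝ) ∈ Set.Ioc (lo r) (lo r + s) := fun hex =>
      hb (Finset.mem_filter.mpr ⟨Finset.mem_range.mpr hrN, hex⟩)
    intro x hx
    set u : ℝ := c + r * s with hu2
    have hfx := floor_const_on_cell hs hno (himg r x hx)
    have hfu := floor_const_on_cell hs hno (himg r u ⟨le_refl u, by linarith⟩)
    have hfr : |Int.fract (θ + σ * x) - Int.fract (θ + σ * u)| ≤ δ := by
      unfold Int.fract
      rw [hfx, hfu]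
      have e : θ + σ * x - ↑⌊lo r + s⌋ - (θ + σ * u - ↑⌊lo r + s⌋) = σ * (x - u) := by ring
      rw [e, abs_mul, hσabs, one_mul]
      rw [abs_le]
      obtain ⟨hx1, hx2⟩ := hx
      constructor <;> simp only [hu2] at hx1 hx2 ⊢ <;> linarith
    exact huc (Int.fract (θ + σ * x)) ⟨Int.fract_nonneg _, (Int.fract_lt_one _).le⟩
      (Int.fract (θ + σ * u)) ⟨Int.fract_nonneg _, (Int.fract_lt_one _).le⟩ hfr
  have hcount : (bad.card : ℝ) ≤ N * s + 1 := by
    apply count_bad N s (θ + σ * c + (σ - 1) / 2 * (N * s)) hs lo _ _ bad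
    · intro r hr
      have := Finset.mem_filter.mp hr
      exact ⟨Finset.mem_range.mp this.1, this.2⟩
    · intro r r' hr hr' hne
      have h1 : (1:ℝ) ≤ |(r : ℝ) - r'| := by
        have hne' : (r : ℤ) ≠ r' := by exact_mod_cast hne
        have := Int.one_le_abs (sub_ne_zero.mpr hne')
        calc (1:ℝ) ≤ |((r : ℤ) : ℝ) - ((r' : ℤ) : ℝ)| := by exact_mod_cast this
          _ = |(r:ℝ) - r'| := by norm_num
      have e : lo r - lo r' = σ * (((r:ℝ) - r') * s) := by simp only [hlo]; ring
      rw [e, abs_mul, hσabs, one_mul, abs_mul, abs_of_pos hs]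
      nlinarith
    · intro r hrN y hy
      obtain ⟨hy1, hy2⟩ := hy
      have hrN' : (r : ℝ) + 1 ≤ N := by exact_mod_cast Nat.succ_le_of_lt hrN
      have hr0 : (0:ℝ) ≤ r := Nat.cast_nonneg r
      rcases hσ with h1 | h1 <;> subst h1 <;> simp only [hlo] at hy1 hy2 ⊢ <;>
        constructor <;> [nlinarith; nlinarith; nlinarith; nlinarith]
  have hmain := riemann_cells h hm M hMh c s hs N ε hε bad hgood
  have hM0 : 0 ≤ M := le_trans (abs_nonneg _) (hMh 0)
  have hb2 : (bad.card : ℝ) * (2 * M) * s ≤ (N * s + 1) * (2 * M) * s :=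
    mul_le_mul_of_nonneg_right
      (mul_le_mul_of_nonneg_right hcount (by positivity : (0:ℝ) ≤ 2 * M)) hs.le
  calc |s * ∑ r ∈ Finset.range N, h (c + r * s) - ∫ x in c..(c + N * s), h x|
      ≤ N * s * ε + bad.card * (2 * M) * s := hmain
    _ ≤ N * s * ε + (N * s + 1) * (2 * M) * s := by linarith

lemma reindex_sum (q : ℕ) (hq : 0 < q) (J : ℤ) (hJ : (q : ℤ) ≤ J) (F : ℤ → ℝ) :
    ∑ j ∈ Finset.Icc (1 : ℤ) J, F j
      = ∑ η ∈ Finset.Icc 1 q, ∑ r ∈ Finset.range ((J - η).toNat / q + 1),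
          F ((η : ℤ) + (q : ℤ) * (r : ℤ)) := by
  have hq' : (0:ℤ) < q := by exact_mod_cast hq
  rw [← Finset.sum_sigma (Finset.Icc 1 q) (fun η => Finset.range ((J - η).toNat / q + 1))
    (fun x => F ((x.1 : ℤ) + (q : ℤ) * (x.2 : ℤ)))]
  apply Finset.sum_nbij' (i := fun j : ℤ => (⟨((j - 1) % (q:ℤ)).toNat + 1, ((j - 1) / (q:ℤ)).toNat⟩ :
      Σ _η : ℕ, ℕ)) (j := fun x : Σ _η : ℕ, ℕ => (x.1 : ℤ) + (q : ℤ) * (x.2 : ℤ))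
  · -- maps into sigma
    intro j hj
    obtain ⟨hj1, hj2⟩ := Finset.mem_Icc.mp hj
    have h0 : (0:ℤ) ≤ j - 1 := by linarith
    have hmod0 : (0:ℤ) ≤ (j-1) % q := Int.emod_nonneg _ (by positivity)
    have hmodq : (j-1) % q < q := Int.emod_lt_of_pos _ hq'
    have hdiv0 : (0:ℤ) ≤ (j-1) / q := Int.ediv_nonneg h0 hq'.le
    apply Finset.mem_sigma.mpr
    refine ⟨Finset.mem_Icc.mpr ⟨by dsimp only; omega, by dsimp only; omega⟩, ?_⟩
    apply Finset.mem_range.mpr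
    dsimp only
    have key : ((j - 1) / q).toNat ≤ (J - (((j-1) % q).toNat + 1 : ℕ)).toNat / q := by
      rw [Nat.le_div_iff_mul_le hq]
      rw [Int.le_toNat (by push_cast; omega)]
      push_cast
      rw [Int.toNat_of_nonneg hdiv0, Int.toNat_of_nonneg hmod0]
      nlinarith [Int.emod_add_mul_ediv (j-1) q]
    omega
  · -- maps back
    rintro ⟨η, r⟩ hx
    obtain ⟨hη, hr⟩ := Finset.mem_sigma.mp hx
    dsimp only at hη hr ⊢
    obtain ⟨hη1, hη2⟩ := Finset.mem_Icc.mp hη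
    have hr' := Finset.mem_range.mp hr
    apply Finset.mem_Icc.mpr
    constructor
    · have : (0:ℤ) ≤ (q:ℤ) * r := by positivity
      omega
    · -- η + q r ≤ J
      have : r ≤ (J - η).toNat / q := by omega
      rw [Nat.le_div_iff_mul_le hq, Int.le_toNat (by omega)] at this
      push_cast at this
      have : (q:ℤ) * r ≤ J - η := by rw [mul_comm]; exact this
      omega
  · -- left inverse
    intro j hj
    obtain ⟨hj1, hj2⟩ := Finset.mem_Icc.mp hj
    have h0 : (0:ℤ) ≤ j - 1 := by linarith
    have hmod0 : (0:ℤ) ≤ (j-1) % q := Int.emod_nonneg _ (by positivity)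
    have hdiv0 : (0:ℤ) ≤ (j-1) / q := Int.ediv_nonneg h0 hq'.le
    simp only []
    push_cast [Int.toNat_of_nonneg hmod0, Int.toNat_of_nonneg hdiv0]
    have := Int.emod_add_mul_ediv (j-1) q
    linarith
  · -- right inverse
    rintro ⟨η, r⟩ hx
    obtain ⟨hη, hr⟩ := Finset.mem_sigma.mp hx
    dsimp only at hη hr ⊢
    obtain ⟨hη1, hη2⟩ := Finset.mem_Icc.mp hη
    have e1 : ((η:ℤ) + (q:ℤ) * r - 1) % q = (η:ℤ) - 1 := by
      have : (η:ℤ) + (q:ℤ) * r - 1 = ((η:ℤ) - 1) + (q:ℤ) * r := by ring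
      rw [this, Int.add_mul_emod_self_left, Int.emod_eq_of_lt (by omega) (by omega)]
    have e2 : ((η:ℤ) + (q:ℤ) * r - 1) / q = r := by
      have : (η:ℤ) + (q:ℤ) * r - 1 = ((η:ℤ) - 1) + (q:ℤ) * r := by ring
      rw [this, Int.add_mul_ediv_left _ _ (by positivity),
        Int.ediv_eq_zero_of_lt (by omega) (by omega)]
      ring
    simp only [e1, e2]
    congr 1 <;> omega
  · -- function values agree
    intro j hj
    obtain ⟨hj1, hj2⟩ := Finset.mem_Icc.mp hj
    have h0 : (0:ℤ) ≤ j - 1 := by linarith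
    have hmod0 : (0:ℤ) ≤ (j-1) % q := Int.emod_nonneg _ (by positivity)
    have hdiv0 : (0:ℤ) ≤ (j-1) / q := Int.ediv_nonneg h0 hq'.le
    congr 1
    push_cast [Int.toNat_of_nonneg hmod0, Int.toNat_of_nonneg hdiv0]
    have := Int.emod_add_mul_ediv (j-1) q
    linarith

lemma sign_spec {x : ℝ} (h : x ≠ 0) :
    (Real.sign x = 1 ∨ Real.sign x = -1) ∧ Real.sign x * |x| = x := by
  rcases lt_or_gt_of_ne h with h1 | h1
  · rw [Real.sign_of_neg h1, abs_of_neg h1]; exact ⟨Or.inr rfl, by ring⟩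
  · rw [Real.sign_of_pos h1, abs_of_pos h1]; exact ⟨Or.inl rfl, by ring⟩

/-- the per-residue-class estimate, fully assembled for one `n`. -/
lemma eta_full (L : ℝ) (m : ℤ) (M ε' δ₀ : ℝ)
    (hMb : ∀ x, |fmLhat L m x| ≤ M) (hε' : 0 ≤ ε') (hδ₀ : 0 < δ₀)
    (huc : ∀ x ∈ Set.Icc (0:ℝ) 1, ∀ y ∈ Set.Icc (0:ℝ) 1,
      |x - y| ≤ δ₀ → |fmL L m x - fmL L m y| ≤ ε')
    (p q : ℕ) (hq : 0 < q) (hL : L = (p : ℝ) / (q : ℝ))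
    (t Lp an : ℝ) (ht : 0 < t) (han : 0 < an)
    (hδ : Lp - L ≠ 0) (hsδ : (q : ℝ) * |Lp - L| ≤ δ₀)
    (J : ℤ) (hJdef : J = ⌊an * t⌋) (hJq : (q : ℤ) ≤ J)
    (η : ℕ) (hη1 : 1 ≤ η) (hη2 : η ≤ q) :
    |(1/an) * ∑ r ∈ Finset.range ((J - η).toNat / q + 1),
        fmLhat L m ((((η : ℤ) + (q : ℤ) * (r : ℤ) : ℤ) : ℝ) * Lp)
      - (1/(q:ℝ)) * ((1/(an * |Lp - L|)) *
          ∫ x in (0:ℝ)..(an * |Lp - L| * t),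
            fmLhat L m ((η:ℝ) * L + Real.sign (Lp - L) * x))|
      ≤ (1/((q:ℝ) * (an * |Lp - L|))) * ((an * |Lp - L| * t + q * |Lp - L|) * ε'
          + (an * |Lp - L| * t + q * |Lp - L| + 1) * (2 * M) * ((q:ℝ) * |Lp - L|)
          + 2 * M * ((q:ℝ) * |Lp - L|)) := by
  have hM0 : 0 ≤ M := le_trans (abs_nonneg _) (hMb 0)
  set δ : ℝ := Lp - L with hδdef
  set d : ℝ := |δ| with hd
  have hd0 : 0 < d := abs_pos.mpr hδ
  set σ : ℝ := Real.sign δ with hσdef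
  obtain ⟨hσ, hσd⟩ := sign_spec hδ
  set s : ℝ := (q : ℝ) * d with hs
  have hs0 : 0 < s := by positivity
  set c : ℝ := (η : ℝ) * d with hc
  set θ : ℝ := (η : ℝ) * L with hθ
  set N : ℕ := (J - η).toNat / q + 1 with hN
  set A : ℝ := an * d with hA
  have hA0 : 0 < A := by positivity
  set T : ℝ := A * t with hT
  set X : ℝ := c + (N : ℝ) * s with hX
  have hqR : (0:ℝ) < q := by exact_mod_cast hq
  -- term identity
  have hterm : ∀ r : ℕ, fmLhat L m ((((η : ℤ) + (q : ℤ) * (r : ℤ) : ℤ) : ℝ) * Lp)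
      = fmLhat L m (θ + σ * (c + (r : ℝ) * s)) := by
    intro r
    have harg : (((η : ℤ) + (q : ℤ) * (r : ℤ) : ℤ) : ℝ) * Lp
        = (θ + σ * (c + (r : ℝ) * s)) + ((r * p : ℕ) : ℤ) := by
      push_cast
      have hLp : Lp = (p:ℝ)/q + σ * d := by
        rw [hσd]; simp only [hδdef]; rw [hL]; ring
      rw [hLp, hθ, hc, hs, hL]
      field_simp
      ring
    rw [harg, fmLhat_periodic]
  -- main Riemann estimate
  have hmain := eta_estimate L m M ε' δ₀ hMb hε' hδ₀ huc θ σ hσ c s hs0 hsδ N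
  -- integral endpoint corrections
  set g : ℝ → ℝ := fun x => fmLhat L m (θ + σ * x) with hg
  have hgm : Measurable g :=
    (fmLhat_measurable L m).comp ((measurable_const.mul measurable_id).const_add θ)
  have hint := bdd_intervalIntegrable g hgm M (fun x => hMb _)
  have split1 := intervalIntegral.integral_add_adjacent_intervals (hint 0 c) (hint c X)
  have split2 := intervalIntegral.integral_add_adjacent_intervals (hint 0 T) (hint T X)
  have hIc : |∫ x in (0:ℝ)..c, g x| ≤ M * c := by
    have := intervalIntegral.norm_integral_le_of_norm_le_const
      (a := (0:ℝ)) (b := c) (C := M) (f := g) (fun x _ => hMb _)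
    rw [Real.norm_eq_abs] at this
    calc |∫ x in (0:ℝ)..c, g x| ≤ M * |c - 0| := this
      _ = M * c := by rw [sub_zero, abs_of_nonneg (by positivity)]
  have hITX : |∫ x in T..X, g x| ≤ M * |X - T| := by
    have := intervalIntegral.norm_integral_le_of_norm_le_const
      (a := T) (b := X) (C := M) (f := g) (fun x _ => hMb _)
    rw [Real.norm_eq_abs] at this
    exact this
  -- integer facts about N
  have hJη : (0:ℤ) ≤ J - η := by
    have : (η : ℤ) ≤ q := by exact_mod_cast hη2
    omega
  have hc0 : (0:ℝ) ≤ c := by positivity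
  set n0 : ℕ := (J - η).toNat with hn0
  have hdm := Nat.div_add_mod n0 q
  have hmlt : n0 % q < q := Nat.mod_lt _ hq
  have htn : ((n0 : ℕ) : ℤ) = J - η := Int.toNat_of_nonneg hJη
  have hqN : q * N = q * (n0 / q) + q := by rw [hN]; ring
  have k1 : n0 < q * N := by omega
  have k2 : q * N ≤ n0 + q := by omega
  have h1Z : J < (η : ℤ) + (q : ℤ) * N := by
    have h : ((n0:ℕ):ℤ) < (q:ℤ) * (N:ℤ) := by exact_mod_cast k1
    linarith [htn]
  have h2Z : (η : ℤ) + (q : ℤ) * N ≤ J + q := by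
    have h : (q:ℤ) * (N:ℤ) ≤ ((n0:ℕ):ℤ) + (q:ℤ) := by exact_mod_cast k2
    linarith [htn]
  have h1R : (J : ℝ) + 1 ≤ (η : ℝ) + (q : ℝ) * N := by
    have h' := (Int.cast_le (R := ℝ)).mpr (Int.add_one_le_iff.mpr h1Z)
    simp only [Int.cast_add, Int.cast_mul, Int.cast_one, Int.cast_natCast] at h'
    exact h'
  have h2R : (η : ℝ) + (q : ℝ) * N ≤ (J : ℝ) + q := by
    have h' := (Int.cast_le (R := ℝ)).mpr h2Z
    simp only [Int.cast_add, Int.cast_mul, Int.cast_natCast] at h'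
    exact h' 
  have hJle : (J : ℝ) ≤ an * t := by rw [hJdef]; exact Int.floor_le _
  have hJgt : an * t < (J : ℝ) + 1 := by rw [hJdef]; exact Int.lt_floor_add_one _
  have hTs : T + s = (an * t + q) * d := by rw [hT, hA, hs]; ring
  have hXe : X = ((η:ℝ) + q * N) * d := by rw [hX, hc, hs]; ring
  have hmulX : ((η:ℝ) + q * N) * d ≤ (an * t + q) * d :=
    mul_le_mul_of_nonneg_right (by linarith) hd0.le
  -- bounds
  have hNs : (N : ℝ) * s ≤ T + s := by
    have e : (N : ℝ) * s = ((η:ℝ) + q * N) * d - c := by rw [hs, hc]; ring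
    rw [e, hTs]
    linarith
  have hTX : T ≤ X := by
    have b1 : T < ((J:ℝ) + 1) * d := by
      have e : T = an * t * d := by rw [hT, hA]; ring
      rw [e]
      exact mul_lt_mul_of_pos_right hJgt hd0
    have b2 : ((J:ℝ) + 1) * d ≤ ((η:ℝ) + q * N) * d :=
      mul_le_mul_of_nonneg_right h1R hd0.le
    rw [hXe]
    linarith
  have hXT : |X - T| ≤ s := by
    rw [abs_of_nonneg (by linarith)]
    have : X ≤ T + s := by rw [hXe, hTs]; linarith
    linarith
  have hcs : c ≤ s := by
    rw [hc, hs]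
    exact mul_le_mul_of_nonneg_right (by exact_mod_cast hη2) hd0.le
  -- assemble
  have key : |s * (∑ r ∈ Finset.range N, fmLhat L m (θ + σ * (c + (r:ℝ) * s)))
      - ∫ x in (0:ℝ)..T, g x| ≤ ((N:ℝ) * s * ε' + ((N:ℝ) * s + 1) * (2*M) * s) + (M * |X - T| + M * c) := by
    have a1 : (∫ x in c..X, g x) = (∫ x in (0:ℝ)..X, g x) - ∫ x in (0:ℝ)..c, g x := by
      linarith [split1]
    have a2 : (∫ x in T..X, g x) = (∫ x in (0:ℝ)..X, g x) - ∫ x in (0:ℝ)..T, g x := by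
      linarith [split2]
    have e0 : s * (∑ r ∈ Finset.range N, fmLhat L m (θ + σ * (c + (r:ℝ) * s)))
        - ∫ x in (0:ℝ)..T, g x
        = (s * (∑ r ∈ Finset.range N, fmLhat L m (θ + σ * (c + (r:ℝ) * s)))
            - ∫ x in c..X, g x) + ((∫ x in T..X, g x) - ∫ x in (0:ℝ)..c, g x) := by
      rw [a1, a2]; ring
    rw [e0]
    calc _ ≤ |s * (∑ r ∈ Finset.range N, fmLhat L m (θ + σ * (c + (r:ℝ) * s)))
            - ∫ x in c..X, g x| + |(∫ x in T..X, g x) - ∫ x in (0:ℝ)..c, g x| := abs_add_le _ _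
      _ ≤ _ := by
        apply add_le_add hmain
        calc |(∫ x in T..X, g x) - ∫ x in (0:ℝ)..c, g x|
            ≤ |∫ x in T..X, g x| + |∫ x in (0:ℝ)..c, g x| := abs_sub _ _
          _ ≤ M * |X - T| + M * c := add_le_add hITX hIc
  -- rewrite LHS of goal
  have hLHS : (1/an) * ∑ r ∈ Finset.range N,
        fmLhat L m ((((η : ℤ) + (q : ℤ) * (r : ℤ) : ℤ) : ℝ) * Lp)
      - (1/(q:ℝ)) * ((1/A) * ∫ x in (0:ℝ)..T, g x)
      = (1/((q:ℝ) * A)) * (s * (∑ r ∈ Finset.range N, fmLhat L m (θ + σ * (c + (r:ℝ) * s)))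
          - ∫ x in (0:ℝ)..T, g x) := by
    rw [Finset.sum_congr rfl (fun r _ => hterm r)]
    have hanne : an ≠ 0 := ne_of_gt han
    have hdne : d ≠ 0 := ne_of_gt hd0
    have hqne : (q:ℝ) ≠ 0 := ne_of_gt hqR
    rw [hs, hA]
    field_simp
    ring
  have hpos : (0:ℝ) < 1/((q:ℝ) * A) := by positivity
  rw [hLHS, abs_mul, abs_of_pos hpos]
  apply mul_le_mul_of_nonneg_left _ hpos.le
  calc |s * (∑ r ∈ Finset.range N, fmLhat L m (θ + σ * (c + (r:ℝ) * s)))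
      - ∫ x in (0:ℝ)..T, g x|
      ≤ ((N:ℝ) * s * ε' + ((N:ℝ) * s + 1) * (2*M) * s) + (M * |X - T| + M * c) := key
    _ ≤ (T + s) * ε' + (T + s + 1) * (2*M) * s + 2 * M * s := by
        have h1 : (N:ℝ) * s * ε' ≤ (T + s) * ε' := mul_le_mul_of_nonneg_right hNs hε'
        have h2 : ((N:ℝ) * s + 1) * (2*M) * s ≤ (T + s + 1) * (2*M) * s := by
          apply mul_le_mul_of_nonneg_right _ hs0.le
          apply mul_le_mul_of_nonneg_right _ (by positivity)
          linarith
        have h3 : M * |X - T| + M * c ≤ 2 * M * s := by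
          have := mul_le_mul_of_nonneg_left hXT hM0
          have := mul_le_mul_of_nonneg_left hcs hM0
          linarith
        linarith

/-- Riemann-sum approximation step: if `L = p/q` in lowest terms, `L_n = b_n/a_n → L`,
`δ_n = L_n - L ≠ 0` eventually, and `a_n|δ_n| → k` with `k ∈ (0,∞)` or `k = ∞`, then
for every `m ∈ ℤ` and `t > 0`,
`(1/a_n) ∑_{j=1}^{⌊a_n t⌋} f̂_{m,L}(j L_n)
  - (1/q) ∑_{η=1}^{q} (1/(a_n|δ_n|)) ∫_0^{a_n|δ_n| t} f̂_{m,L}(ηL + sgn(δ_n) x) dx → 0`. -/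
theorem riemann_sum_step (a b : ℕ → ℕ) (ha : StrictMono a) (hb : StrictMono b)
    (ha0 : ∀ n, 0 < a n) (hb0 : ∀ n, 0 < b n)
    (p q : ℕ) (hp : 0 < p) (hq : 0 < q) (hpq : Nat.Coprime p q)
    (L : ℝ) (hL : L = (p : ℝ) / (q : ℝ))
    (hconv : Tendsto (fun n => (b n : ℝ) / (a n : ℝ)) atTop (nhds L))
    (hne : ∀ᶠ n in atTop, (b n : ℝ) / (a n : ℝ) - L ≠ 0)
    (hk : (∃ k : ℝ, 0 < k ∧
            Tendsto (fun n => (a n : ℝ) * |(b n : ℝ) / (a n : ℝ) - L|) atTop (nhds k)) ∨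
          Tendsto (fun n => (a n : ℝ) * |(b n : ℝ) / (a n : ℝ) - L|) atTop atTop) :
    ∀ (m : ℤ) (t : ℝ), 0 < t →
      Tendsto (fun n =>
        (1 / (a n : ℝ)) * ∑ j ∈ Finset.Icc (1 : ℤ) ⌊(a n : ℝ) * t⌋,
            fmLhat L m ((j : ℝ) * ((b n : ℝ) / (a n : ℝ)))
        - (1 / (q : ℝ)) * ∑ η ∈ Finset.Icc 1 q,
            (1 / ((a n : ℝ) * |(b n : ℝ) / (a n : ℝ) - L|)) *
              ∫ x in (0 : ℝ)..((a n : ℝ) * |(b n : ℝ) / (a n : ℝ) - L| * t),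
                fmLhat L m ((η : ℝ) * L + Real.sign ((b n : ℝ) / (a n : ℝ) - L) * x))
        atTop (nhds 0) := by
  intro m t ht
  obtain ⟨M, hM0, hMb⟩ := fmLhat_bound L m
  rw [NormedAddCommGroup.tendsto_nhds_zero]
  intro ε hε
  set ε' : ℝ := ε / (2 * (t + 1)) with hε'def
  have hε'0 : 0 < ε' := by positivity
  obtain ⟨δ₀, hδ₀, huc⟩ := fmL_unifcont L m hε'0
  obtain ⟨A₀, hA₀, hAev⟩ : ∃ A₀ : ℝ, 0 < A₀ ∧
      ∀ᶠ n in atTop, A₀ ≤ (a n : ℝ) * |(b n : ℝ) / (a n : ℝ) - L| := by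
    rcases hk with ⟨k, hk0, hkt⟩ | hkt
    · exact ⟨k/2, by linarith,
        (hkt.eventually (eventually_gt_nhds (by linarith : k/2 < k))).mono
          (fun n h => h.le)⟩
    · exact ⟨1, one_pos, hkt.eventually_ge_atTop 1⟩
  set C : ℝ := 2*M*(q:ℝ)*t + ((q:ℝ)*ε' + 2*M*(q:ℝ)*((q:ℝ)+2))/A₀ with hC
  have hC0 : 0 ≤ C := by positivity
  have hqR : (0:ℝ) < q := by exact_mod_cast hq
  have hdcv : Tendsto (fun n => |(b n : ℝ) / (a n : ℝ) - L|) atTop (nhds 0) := by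
    have h0 : Tendsto (fun n => (b n : ℝ) / (a n : ℝ) - L) atTop (nhds 0) := by
      simpa using hconv.sub_const L
    simpa using h0.abs
  have hs1 : ∀ᶠ n in atTop, (q:ℝ) * |(b n : ℝ) / (a n : ℝ) - L| ≤ δ₀ := by
    filter_upwards [hdcv.eventually (eventually_lt_nhds
      (by positivity : (0:ℝ) < δ₀ / ((q:ℝ) + 1)))] with n hn
    have : (q:ℝ) ≤ (q:ℝ) + 1 := by linarith
    calc (q:ℝ) * |(b n : ℝ) / (a n : ℝ) - L| ≤ ((q:ℝ)+1) * (δ₀/((q:ℝ)+1)) := by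
          apply mul_le_mul this hn.le (abs_nonneg _) (by linarith)
      _ = δ₀ := by field_simp
  have hs2 : ∀ᶠ n in atTop, |(b n : ℝ) / (a n : ℝ) - L| ≤ 1 :=
    (hdcv.eventually (eventually_lt_nhds (by norm_num : (0:ℝ) < 1))).mono
      (fun n h => h.le)
  have hs3 : ∀ᶠ n in atTop, |(b n : ℝ) / (a n : ℝ) - L| ≤ (ε/2)/(C+1) :=
    (hdcv.eventually (eventually_lt_nhds (by positivity : (0:ℝ) < (ε/2)/(C+1)))).mono
      (fun n h => h.le)
  have hat : Tendsto (fun n => (a n : ℝ) * t) atTop atTop :=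
    (tendsto_natCast_atTop_atTop.comp ha.tendsto_atTop).atTop_mul_const ht
  have hqat : ∀ᶠ n in atTop, (q:ℝ) ≤ (a n : ℝ) * t := hat.eventually_ge_atTop _
  filter_upwards [hne, hAev, hs1, hs2, hs3, hqat] with n hδn hAn hn1 hn2 hn3 hnq
  set an : ℝ := (a n : ℝ) with han_def
  set Lp : ℝ := (b n : ℝ) / (a n : ℝ) with hLp
  set d : ℝ := |Lp - L| with hd
  have han : 0 < an := by rw [han_def]; exact_mod_cast ha0 n
  have hd0 : 0 < d := abs_pos.mpr hδn
  set A : ℝ := an * d with hA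
  have hApos : 0 < A := by positivity
  have hAA : A₀ ≤ A := hAn
  set J : ℤ := ⌊an * t⌋ with hJ
  have hJq : (q:ℤ) ≤ J := by
    rw [hJ]
    exact Int.le_floor.mpr (by exact_mod_cast hnq)
  -- reindex the j-sum
  have hre := reindex_sum q hq J hJq (fun j => fmLhat L m ((j : ℝ) * Lp))
  rw [Real.norm_eq_abs]
  set B : ℝ := (1/((q:ℝ) * (an * d))) * ((an * d * t + q * d) * ε'
      + (an * d * t + q * d + 1) * (2 * M) * ((q:ℝ) * d)
      + 2 * M * ((q:ℝ) * d)) with hB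
  have hz : ∀ η ∈ Finset.Icc 1 q,
      |(1/an) * ∑ r ∈ Finset.range ((J - η).toNat / q + 1),
          fmLhat L m ((((η : ℤ) + (q : ℤ) * (r : ℤ) : ℤ) : ℝ) * Lp)
        - (1/(q:ℝ)) * ((1/(an * d)) *
            ∫ x in (0:ℝ)..(an * d * t),
              fmLhat L m ((η:ℝ) * L + Real.sign (Lp - L) * x))| ≤ B := by
    intro η hη
    obtain ⟨hη1, hη2⟩ := Finset.mem_Icc.mp hη
    exact eta_full L m M ε' δ₀ hMb hε'0.le hδ₀ huc p q hq hL t Lp an ht han hδn hn1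
      J hJ hJq η hη1 hη2
  have hexpr : (1 / an) * ∑ j ∈ Finset.Icc (1 : ℤ) J, fmLhat L m ((j : ℝ) * Lp)
      - (1 / (q : ℝ)) * ∑ η ∈ Finset.Icc 1 q,
          (1 / (an * d)) * ∫ x in (0 : ℝ)..(an * d * t),
            fmLhat L m ((η : ℝ) * L + Real.sign (Lp - L) * x)
      = ∑ η ∈ Finset.Icc 1 q,
          ((1/an) * ∑ r ∈ Finset.range ((J - η).toNat / q + 1),
            fmLhat L m ((((η : ℤ) + (q : ℤ) * (r : ℤ) : ℤ) : ℝ) * Lp)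
          - (1/(q:ℝ)) * ((1/(an * d)) *
              ∫ x in (0:ℝ)..(an * d * t),
                fmLhat L m ((η:ℝ) * L + Real.sign (Lp - L) * x))) := by
    rw [hre, Finset.mul_sum, Finset.mul_sum, ← Finset.sum_sub_distrib]
  rw [hexpr]
  have hbound : |∑ η ∈ Finset.Icc 1 q,
      ((1/an) * ∑ r ∈ Finset.range ((J - η).toNat / q + 1),
          fmLhat L m ((((η : ℤ) + (q : ℤ) * (r : ℤ) : ℤ) : ℝ) * Lp)
        - (1/(q:ℝ)) * ((1/(an * d)) *
            ∫ x in (0:ℝ)..(an * d * t),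
              fmLhat L m ((η:ℝ) * L + Real.sign (Lp - L) * x)))| ≤ (q:ℝ) * B := by
    calc _ ≤ ∑ η ∈ Finset.Icc 1 q,
        |(1/an) * ∑ r ∈ Finset.range ((J - η).toNat / q + 1),
            fmLhat L m ((((η : ℤ) + (q : ℤ) * (r : ℤ) : ℤ) : ℝ) * Lp)
          - (1/(q:ℝ)) * ((1/(an * d)) *
              ∫ x in (0:ℝ)..(an * d * t),
                fmLhat L m ((η:ℝ) * L + Real.sign (Lp - L) * x))| :=
        Finset.abs_sum_le_sum_abs _ _
      _ ≤ (Finset.Icc 1 q).card • B := Finset.sum_le_card_nsmul _ _ B hz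
      _ = (q:ℝ) * B := by rw [Nat.card_Icc, nsmul_eq_mul]; norm_num
  -- final arithmetic
  have hR : (q:ℝ)*d*ε' + ((q:ℝ)*d+1)*(2*M)*((q:ℝ)*d) + 2*M*((q:ℝ)*d)
      ≤ d*((q:ℝ)*ε' + 2*M*(q:ℝ)*((q:ℝ)+2)) := by
    have hkey : (0:ℝ) ≤ 2*M*(q:ℝ)*(q:ℝ)*d*(1-d) :=
      mul_nonneg (by positivity) (by linarith)
    nlinarith [hkey]
  have heB : (q:ℝ) * B = t*ε' + 2*M*(q:ℝ)*d*t
      + ((q:ℝ)*d*ε' + ((q:ℝ)*d+1)*(2*M)*((q:ℝ)*d) + 2*M*((q:ℝ)*d)) * (1/A) := by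
    rw [hB, hA]
    have h1 : an ≠ 0 := ne_of_gt han
    have h2 : d ≠ 0 := ne_of_gt hd0
    have h3 : (q:ℝ) ≠ 0 := ne_of_gt hqR
    field_simp
    ring
  have hfrac : (1:ℝ)/A ≤ 1/A₀ := one_div_le_one_div_of_le hA₀ hAA
  have hRA : ((q:ℝ)*d*ε' + ((q:ℝ)*d+1)*(2*M)*((q:ℝ)*d) + 2*M*((q:ℝ)*d)) * (1/A)
      ≤ (d*((q:ℝ)*ε' + 2*M*(q:ℝ)*((q:ℝ)+2))) * (1/A₀) := by
    apply mul_le_mul hR hfrac (by positivity) (by positivity)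
  have hdC : d * C = 2*M*(q:ℝ)*d*t + (d*((q:ℝ)*ε' + 2*M*(q:ℝ)*((q:ℝ)+2))) * (1/A₀) := by
    rw [hC]; field_simp
  have htotal : (q:ℝ) * B ≤ t*ε' + d*C := by
    rw [heB, hdC]; linarith
  have htε : t * ε' < ε/2 := by
    have he : t * ε' = t * ε / (2*(t+1)) := by rw [hε'def]; ring
    rw [he, div_lt_iff₀ (by linarith : (0:ℝ) < 2*(t+1))]
    nlinarith
  have hdCε : d * C ≤ ε/2 := by
    have h1 : d * C ≤ ((ε/2)/(C+1)) * C := mul_le_mul_of_nonneg_right hn3 hC0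
    have h2 : ((ε/2)/(C+1)) * C = (ε/2) * (C/(C+1)) := by ring
    have h3 : C/(C+1) ≤ 1 := by
      rw [div_le_one (by linarith)]; linarith
    nlinarith [hε.le]
  calc |_| ≤ (q:ℝ) * B := hbound
    _ ≤ t*ε' + d*C := htotal
    _ < ε := by
        calc t*ε' + d*C < ε/2 + ε/2 := add_lt_add_of_lt_of_le htε hdCε
          _ = ε := by ring
end

section
/- Let $(a_n)$ and $(b_n)$ be strictly increasing sequences of positive integers with $L_n = b_n/a_n \to L = p/q$, where $p, q \in \mathbb{N}$ are relatively prime, and set $\delta_n = L_n - L$. Suppose $a_n |\delta_n| \to \infty$. Then for every $m \in \mathbb{Z}$ and every $t > 0$, $\frac{1}{a_n} \sum_{j=1}^{\lfloor a_n t \rfloor} \widehat{f}_{m,L}(j L_n) \to t \int_0^1 f_{m,L}(x)\, dx$ as $n \to \infty$. -/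
open Filter MeasureTheory

section per

variable {g : ℝ → ℝ}

lemma G_bound {C : ℝ} (hC : ∀ x ∈ Set.Icc (0:ℝ) 1, |g x| ≤ C) (x : ℝ) :
    |g (Int.fract x)| ≤ C :=
  hC _ ⟨Int.fract_nonneg x, (Int.fract_lt_one x).le⟩

lemma G_intInt (hg : Continuous g) {C : ℝ} (hC : ∀ x ∈ Set.Icc (0:ℝ) 1, |g x| ≤ C)
    (u v : ℝ) : IntervalIntegrable (fun x => g (Int.fract x)) volume u v := by
  rw [intervalIntegrable_iff]
  apply Measure.integrableOn_of_bounded (M := C) (measure_Ioc_lt_top).ne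
  · exact ((hg.measurable.comp measurable_fract).aestronglyMeasurable)
  · exact Eventually.of_forall (fun x => by simpa using G_bound hC x)

lemma G_per : Function.Periodic (fun x => g (Int.fract x)) 1 := by
  intro x; simp [Int.fract_add_one]

lemma G_int01 : (∫ x in (0:ℝ)..1, g (Int.fract x)) = ∫ x in (0:ℝ)..1, g x := by
  apply intervalIntegral.integral_congr_ae
  have h1 : ∀ᵐ x : ℝ, x ≠ (1:ℝ) := by
    rw [ae_iff]; simpa using measure_singleton (1:ℝ)
  filter_upwards [h1] with x hx hmem
  rw [Set.uIoc_of_le (by norm_num : (0:ℝ) ≤ 1)] at hmem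
  rw [Int.fract_eq_self.2 ⟨hmem.1.le, lt_of_le_of_ne hmem.2 hx⟩]

lemma key (hg : Continuous g) {C : ℝ} (hC : ∀ x ∈ Set.Icc (0:ℝ) 1, |g x| ≤ C)
    {ε δ : ℝ} (hδ : 0 < δ)
    (huc : ∀ x ∈ Set.Icc (0:ℝ) 1, ∀ y ∈ Set.Icc (0:ℝ) 1, |x - y| ≤ δ → |g x - g y| ≤ ε)
    (c s : ℝ) (M : ℕ) (hM : 1 ≤ M) (hs : 0 < s) (hsδ : s ≤ δ) :
    |(∑ i ∈ Finset.range M, s * g (Int.fract (c + i * s)))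
        - ((M:ℝ) * s) * (∫ x in (0:ℝ)..1, g x)|
      ≤ ε * ((M:ℝ) * s) + 2*C*s*(((M:ℝ)*s) + 1) + (C + |∫ x in (0:ℝ)..1, g x|) := by
  set G : ℝ → ℝ := fun x => g (Int.fract x) with hG
  set I : ℝ := ∫ x in (0:ℝ)..1, g x with hI
  set x : ℕ → ℝ := fun i => c + i * s with hxdef
  have hC0 : 0 ≤ C := le_trans (abs_nonneg _) (hC 0 (by norm_num))
  have hε0 : 0 ≤ ε := by
    have := huc 0 (by norm_num) 0 (by norm_num) (by simpa using hδ.le)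
    simpa using this
  have hxsucc : ∀ i : ℕ, x (i+1) = x i + s := by
    intro i; simp only [hxdef]; push_cast; ring
  have hxmono : ∀ i : ℕ, x i ≤ x (i+1) := fun i => by rw [hxsucc]; linarith
  have hint : ∀ u v : ℝ, IntervalIntegrable G volume u v := G_intInt hg hC
  have hsum : ∑ i ∈ Finset.range M, (∫ u in x i..x (i+1), G u) = ∫ u in (x 0)..(x M), G u :=
    intervalIntegral.sum_integral_adjacent_intervals (fun i _ => hint _ _)
  -- per-index estimate
  have hstep : ∀ i : ℕ,
      |s * G (x i) - ∫ u in x i..x (i+1), G u|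
        ≤ ε * s + (if ⌊x i⌋ < ⌊x (i+1)⌋ then 2*C*s else 0) := by
    intro i
    have hconst : s * G (x i) = ∫ _ in x i..x (i+1), G (x i) := by
      rw [intervalIntegral.integral_const, hxsucc]
      simp [smul_eq_mul]
    have hdiff : s * G (x i) - ∫ u in x i..x (i+1), G u
        = - ∫ u in x i..x (i+1), (G u - G (x i)) := by
      rw [intervalIntegral.integral_sub (hint _ _) intervalIntegrable_const, hconst]; ring
    rw [hdiff, abs_neg]
    have hlen : |x (i+1) - x i| = s := by rw [hxsucc]; simp [abs_of_pos hs]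
    by_cases hbad : ⌊x i⌋ < ⌊x (i+1)⌋
    · rw [if_pos hbad]
      have : |∫ u in x i..x (i+1), (G u - G (x i))| ≤ (2*C) * |x (i+1) - x i| := by
        rw [← Real.norm_eq_abs]
        apply intervalIntegral.norm_integral_le_of_norm_le_const
        intro u hu
        have h1 : |G u| ≤ C := G_bound hC u
        have h2 : |G (x i)| ≤ C := G_bound hC (x i)
        calc ‖G u - G (x i)‖ ≤ |G u| + |G (x i)| := abs_sub _ _
          _ ≤ 2*C := by linarith
      rw [hlen] at this
      nlinarith [mul_nonneg hε0 hs.le]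
    · rw [if_neg hbad]
      push_neg at hbad
      have hfloor : ⌊x i⌋ = ⌊x (i+1)⌋ :=
        le_antisymm (Int.floor_le_floor (hxmono i)) hbad
      have : |∫ u in x i..x (i+1), (G u - G (x i))| ≤ ε * |x (i+1) - x i| := by
        rw [← Real.norm_eq_abs]
        apply intervalIntegral.norm_integral_le_of_norm_le_const
        intro u hu
        rw [Set.uIoc_of_le (hxmono i)] at hu
        have hufl : ⌊u⌋ = ⌊x i⌋ := le_antisymm (hfloor ▸ Int.floor_le_floor hu.2) (Int.floor_le_floor hu.1.le)
        have hfr : Int.fract u - Int.fract (x i) = u - x i := by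
          unfold Int.fract; rw [hufl]; ring
        have hdist : |Int.fract u - Int.fract (x i)| ≤ δ := by
          rw [hfr, abs_of_nonneg (by linarith [hu.1.le])]
          have := hu.2; rw [hxsucc] at this; linarith
        exact huc _ ⟨Int.fract_nonneg u, (Int.fract_lt_one u).le⟩ _
          ⟨Int.fract_nonneg (x i), (Int.fract_lt_one (x i)).le⟩ hdist
      rw [hlen] at this
      linarith
  -- telescoping bound on bad terms
  have hbadsum : ∑ i ∈ Finset.range M, (if ⌊x i⌋ < ⌊x (i+1)⌋ then 2*C*s else 0)
      ≤ 2*C*s*(((M:ℝ)*s) + 1) := by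
    have h1 : ∀ i ∈ Finset.range M, (if ⌊x i⌋ < ⌊x (i+1)⌋ then 2*C*s else 0)
        ≤ 2*C*s * ((⌊x (i+1)⌋ : ℝ) - (⌊x i⌋ : ℝ)) := by
      intro i _
      by_cases hbad : ⌊x i⌋ < ⌊x (i+1)⌋
      · rw [if_pos hbad]
        have h1' : ⌊x i⌋ + 1 ≤ ⌊x (i+1)⌋ := Int.lt_iff_add_one_le.mp hbad
        have h1'' : (⌊x i⌋:ℝ) + 1 ≤ (⌊x (i+1)⌋:ℝ) := by exact_mod_cast h1'
        have : (1:ℝ) ≤ (⌊x (i+1)⌋ : ℝ) - (⌊x i⌋ : ℝ) := by linarith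
        nlinarith [mul_nonneg (mul_nonneg (by norm_num : (0:ℝ) ≤ 2) hC0) hs.le]
      · rw [if_neg hbad]
        push_neg at hbad
        have hfl : (⌊x i⌋ : ℝ) ≤ (⌊x (i+1)⌋ : ℝ) := by exact_mod_cast Int.floor_le_floor (hxmono i)
        have h2 : (0:ℝ) ≤ 2*C*s := by positivity
        nlinarith
    calc ∑ i ∈ Finset.range M, (if ⌊x i⌋ < ⌊x (i+1)⌋ then 2*C*s else 0)
        ≤ ∑ i ∈ Finset.range M, 2*C*s * ((⌊x (i+1)⌋ : ℝ) - (⌊x i⌋ : ℝ)) :=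
          Finset.sum_le_sum h1
      _ = 2*C*s * ((⌊x M⌋ : ℝ) - (⌊x 0⌋ : ℝ)) := by
          rw [← Finset.mul_sum, Finset.sum_range_sub (fun i => ((⌊x i⌋ : ℝ)))]
      _ ≤ 2*C*s*(((M:ℝ)*s) + 1) := by
          have h3 : (⌊x M⌋ : ℝ) ≤ x M := Int.floor_le _
          have h4 : x 0 - 1 < (⌊x 0⌋ : ℝ) := Int.sub_one_lt_floor _
          have h5 : x M - x 0 = (M:ℝ) * s := by simp [hxdef]
          have h2 : (0:ℝ) ≤ 2*C*s := by positivity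
          nlinarith
  -- tail estimate
  have htail : |(∫ u in (x 0)..(x M), G u) - ((M:ℝ)*s) * I| ≤ C + |I| := by
    set T : ℝ := (M:ℝ) * s with hT
    have hT0 : 0 < T := by positivity
    set K : ℤ := ⌊T⌋ with hK
    have hxM : x M = x 0 + T := by simp [hxdef, hT]
    have hsplit : (∫ u in (x 0)..(x 0 + (K:ℝ)), G u) + (∫ u in (x 0 + (K:ℝ))..(x 0 + T), G u)
        = ∫ u in (x 0)..(x 0 + T), G u :=
      intervalIntegral.integral_add_adjacent_intervals (hint _ _) (hint _ _)
    have hper : (∫ u in (x 0)..(x 0 + (K:ℝ)), G u) = (K:ℝ) * I := by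
      have h1 := (G_per (g := g)).intervalIntegral_add_zsmul_eq K (x 0) hint
      have h2 := (G_per (g := g)).intervalIntegral_add_eq (x 0) 0
      rw [zsmul_eq_mul, mul_one] at h1
      rw [h1, h2, zero_add, G_int01, zsmul_eq_mul]
    have hrem : |∫ u in (x 0 + (K:ℝ))..(x 0 + T), G u| ≤ C * (T - K) := by
      have := intervalIntegral.norm_integral_le_of_norm_le_const
        (C := C) (f := G) (a := x 0 + (K:ℝ)) (b := x 0 + T)
        (fun u _ => G_bound hC u)
      have heq : x 0 + T - (x 0 + (K:ℝ)) = T - (K:ℝ) := by ring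
      have hTK : 0 ≤ T - (K:ℝ) := by
        have := Int.floor_le T; simp only [← hK] at this; linarith
      calc |∫ u in (x 0 + (K:ℝ))..(x 0 + T), G u| ≤ C * |x 0 + T - (x 0 + (K:ℝ))| := by
            rw [← Real.norm_eq_abs]; exact this
        _ = C * (T - K) := by rw [heq, abs_of_nonneg hTK]
    have hKT : T - (K:ℝ) < 1 := by
      have := Int.lt_floor_add_one T; simp only [← hK] at this; linarith
    have hKT0 : 0 ≤ T - (K:ℝ) := by
      have := Int.floor_le T; simp only [← hK] at this; linarith
    have habs : |(K:ℝ) * I - T * I| ≤ |I| := by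
      rw [← sub_mul, abs_mul]
      have : |(K:ℝ) - T| ≤ 1 := by rw [abs_of_nonpos (by linarith)]; linarith
      nlinarith [abs_nonneg I]
    rw [hxM, ← hsplit, hper]
    calc |(K:ℝ) * I + (∫ u in (x 0 + (K:ℝ))..(x 0 + T), G u) - T * I|
        ≤ |(K:ℝ) * I - T * I| + |∫ u in (x 0 + (K:ℝ))..(x 0 + T), G u| := by
          have := abs_add_le ((K:ℝ) * I - T * I) (∫ u in (x 0 + (K:ℝ))..(x 0 + T), G u)
          calc _ = |((K:ℝ) * I - T * I) + (∫ u in (x 0 + (K:ℝ))..(x 0 + T), G u)| := by ring_nf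
            _ ≤ _ := this
      _ ≤ |I| + C * (T - K) := add_le_add habs hrem
      _ ≤ C + |I| := by nlinarith
  -- combine
  have hmain : |(∑ i ∈ Finset.range M, s * G (x i)) - (∫ u in (x 0)..(x M), G u)|
      ≤ ε * ((M:ℝ) * s) + 2*C*s*(((M:ℝ)*s) + 1) := by
    rw [← hsum, ← Finset.sum_sub_distrib]
    calc |∑ i ∈ Finset.range M, (s * G (x i) - ∫ u in x i..x (i+1), G u)|
        ≤ ∑ i ∈ Finset.range M, |s * G (x i) - ∫ u in x i..x (i+1), G u| :=
          Finset.abs_sum_le_sum_abs _ _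
      _ ≤ ∑ i ∈ Finset.range M, (ε * s + (if ⌊x i⌋ < ⌊x (i+1)⌋ then 2*C*s else 0)) :=
          Finset.sum_le_sum (fun i _ => hstep i)
      _ = (M:ℝ) * (ε * s) + ∑ i ∈ Finset.range M, (if ⌊x i⌋ < ⌊x (i+1)⌋ then 2*C*s else 0) := by
          rw [Finset.sum_add_distrib, Finset.sum_const, Finset.card_range, nsmul_eq_mul]
      _ ≤ ε * ((M:ℝ) * s) + 2*C*s*(((M:ℝ)*s) + 1) := by
          have := hbadsum; linarith [hbadsum, (by ring : (M:ℝ) * (ε * s) = ε * ((M:ℝ)*s))]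
  calc |(∑ i ∈ Finset.range M, s * G (x i)) - ((M:ℝ) * s) * I|
      ≤ |(∑ i ∈ Finset.range M, s * G (x i)) - (∫ u in (x 0)..(x M), G u)|
        + |(∫ u in (x 0)..(x M), G u) - ((M:ℝ)*s) * I| := abs_sub_le _ _ _
    _ ≤ ε * ((M:ℝ) * s) + 2*C*s*(((M:ℝ)*s) + 1) + (C + |I|) := add_le_add hmain htail

lemma lemA_pos (hg : Continuous g) (c s : ℕ → ℝ) (M : ℕ → ℕ)
    (hs0 : ∀ n, 0 ≤ s n)
    (hs : Tendsto s atTop (nhds 0))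
    (hMs : Tendsto (fun n => (M n : ℝ) * s n) atTop atTop) :
    Tendsto (fun n => (1 / (M n : ℝ)) * ∑ i ∈ Finset.range (M n), g (Int.fract (c n + i * s n)))
      atTop (nhds (∫ x in (0:ℝ)..1, g x)) := by
  set I : ℝ := ∫ x in (0:ℝ)..1, g x with hI
  obtain ⟨C, hC⟩ := isCompact_Icc.exists_bound_of_continuousOn (s := Set.Icc (0:ℝ) 1)
    hg.continuousOn
  simp only [Real.norm_eq_abs] at hC
  have hC0 : 0 ≤ C := le_trans (abs_nonneg _) (hC 0 (by norm_num))
  rw [Metric.tendsto_nhds]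
  intro ε hε
  obtain ⟨δ', hδ'0, hδ'⟩ := (Metric.uniformContinuousOn_iff).1
    (isCompact_Icc.uniformContinuousOn_of_continuous (s := Set.Icc (0:ℝ) 1) hg.continuousOn)
    (ε/5) (by positivity)
  set δ : ℝ := δ'/2 with hδdef
  have hδ0 : 0 < δ := by positivity
  have huc : ∀ x ∈ Set.Icc (0:ℝ) 1, ∀ y ∈ Set.Icc (0:ℝ) 1, |x - y| ≤ δ → |g x - g y| ≤ ε/5 := by
    intro x hx y hy hxy
    have := hδ' x hx y hy (by rw [Real.dist_eq]; linarith)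
    rw [Real.dist_eq] at this; linarith
  have h1 : ∀ᶠ n in atTop, max 1 (5*(C + |I|)/ε) ≤ (M n : ℝ) * s n :=
    hMs.eventually_ge_atTop _
  have h2 : ∀ᶠ n in atTop, s n < min δ (ε/(10*C+1)) := by
    have := Metric.tendsto_nhds.1 hs (min δ (ε/(10*C+1))) (by positivity)
    filter_upwards [this] with n hn
    rw [Real.dist_eq, sub_zero, abs_of_nonneg (hs0 n)] at hn; exact hn
  filter_upwards [h1, h2] with n hn1 hn2
  have hMs1 : (1:ℝ) ≤ (M n : ℝ) * s n := le_trans (le_max_left _ _) hn1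
  have hsn : 0 < s n := by
    rcases lt_or_eq_of_le (hs0 n) with h | h
    · exact h
    · exfalso; rw [← h] at hMs1; simp at hMs1; linarith
  have hMn : 1 ≤ M n := by
    by_contra h
    push_neg at h
    have h0 : M n = 0 := by omega
    rw [h0] at hMs1
    norm_num at hMs1
  have hMnR : (0:ℝ) < (M n : ℝ) := by exact_mod_cast hMn
  have hkey := key hg hC hδ0 huc (c n) (s n) (M n) hMn hsn
    (le_trans hn2.le (by simp [min_le_left]))
  rw [← hI] at hkey
  set S : ℝ := ∑ i ∈ Finset.range (M n), g (Int.fract (c n + i * s n)) with hS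
  have hsumeq : ∑ i ∈ Finset.range (M n), s n * g (Int.fract (c n + i * s n)) = s n * S := by
    rw [hS, Finset.mul_sum]
  rw [hsumeq] at hkey
  have hid : (1 / (M n : ℝ)) * S - I = (s n * S - ((M n:ℝ) * s n) * I) / ((M n:ℝ) * s n) := by
    field_simp
  have hE : |s n * S - ((M n:ℝ) * s n) * I| ≤ (4*ε/5) * ((M n:ℝ) * s n) := by
    have b1 : 2*C*(s n) ≤ ε/5 := by
      have : s n ≤ ε/(10*C+1) := le_trans hn2.le (min_le_right _ _)
      have h10 : (0:ℝ) < 10*C+1 := by positivity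
      rw [le_div_iff₀ h10] at this
      nlinarith
    have b2 : 2*C*(s n)*(((M n:ℝ) * s n) + 1) ≤ (2*ε/5) * ((M n:ℝ)*s n) := by
      have h2cs : 0 ≤ 2*C*(s n) := by positivity
      nlinarith
    have b3 : C + |I| ≤ (ε/5) * ((M n:ℝ)*s n) := by
      have : 5*(C + |I|)/ε ≤ (M n:ℝ)*s n := le_trans (le_max_right _ _) hn1
      rw [div_le_iff₀ hε] at this
      nlinarith
    calc |s n * S - ((M n:ℝ) * s n) * I|
        ≤ ε/5 * ((M n:ℝ) * s n) + 2*C*(s n)*(((M n:ℝ)*(s n)) + 1) + (C + |I|) := hkey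
      _ ≤ ε/5 * ((M n:ℝ) * s n) + (2*ε/5) * ((M n:ℝ)*s n) + (ε/5) * ((M n:ℝ)*s n) :=
          by linarith
      _ = (4*ε/5) * ((M n:ℝ) * s n) := by ring
  rw [Real.dist_eq, hid, abs_div, abs_of_pos (by positivity : (0:ℝ) < (M n:ℝ) * s n)]
  rw [div_lt_iff₀ (by positivity : (0:ℝ) < (M n:ℝ) * s n)]
  calc |s n * S - ((M n:ℝ) * s n) * I| ≤ (4*ε/5) * ((M n:ℝ) * s n) := hE
    _ < ε * ((M n:ℝ) * s n) := by nlinarith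

lemma lemA (hg : Continuous g) (c s : ℕ → ℝ) (M : ℕ → ℕ)
    (hs : Tendsto s atTop (nhds 0))
    (hMs : Tendsto (fun n => (M n : ℝ) * |s n|) atTop atTop) :
    Tendsto (fun n => (1 / (M n : ℝ)) * ∑ i ∈ Finset.range (M n), g (Int.fract (c n + i * s n)))
      atTop (nhds (∫ x in (0:ℝ)..1, g x)) := by
  set c' : ℕ → ℝ := fun n => if 0 ≤ s n then c n else c n + ((M n : ℝ) - 1) * s n with hc'
  have habs : Tendsto (fun n => |s n|) atTop (nhds 0) := by
    have := hs.abs; simpa using this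
  have := lemA_pos hg c' (fun n => |s n|) M (fun n => abs_nonneg _) habs hMs
  apply this.congr
  intro n
  congr 1
  by_cases hsn : 0 ≤ s n
  · apply Finset.sum_congr rfl
    intro i _
    simp only [hc', if_pos hsn, abs_of_nonneg hsn]
  · push_neg at hsn
    rcases Nat.eq_zero_or_pos (M n) with hM0 | hM1
    · simp [hM0]
    · rw [← Finset.sum_range_reflect (fun i => g (Int.fract (c n + i * s n))) (M n)]
      apply Finset.sum_congr rfl
      intro i hi
      rw [Finset.mem_range] at hi
      congr 1
      have hcast : ((M n - 1 - i : ℕ) : ℝ) = (M n : ℝ) - 1 - i := by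
        have h1 : 1 ≤ M n := hM1
        have h2 : i ≤ M n - 1 := by omega
        push_cast [Nat.cast_sub h2, Nat.cast_sub h1]
        ring
      rw [hcast]
      simp only [hc', if_neg (not_le.2 hsn), abs_of_neg hsn]
      ring
end per


lemma icc_to_range (N : ℕ) (F : ℤ → ℝ) :
    ∑ j ∈ Finset.Icc (1:ℤ) (N:ℤ), F j = ∑ k ∈ Finset.range N, F ((k:ℤ)+1) := by
  refine Finset.sum_nbij' (fun j => (j - 1).toNat) (fun k => (k:ℤ)+1) ?_ ?_ ?_ ?_ ?_
  · intro j hj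
    simp only [Finset.mem_Icc] at hj
    rw [Finset.mem_range]
    omega
  · intro k hk
    rw [Finset.mem_range] at hk
    simp only [Finset.mem_Icc]
    omega
  · intro j hj
    simp only [Finset.mem_Icc] at hj
    omega
  · intro k _
    omega
  · intro j hj
    simp only [Finset.mem_Icc] at hj
    congr 1
    omega

lemma cnt_iff {q : ℕ} (hq : 0 < q) (N r : ℕ) (hr : r < q) (i : ℕ) :
    i < (N - r + (q-1))/q ↔ q*i + r < N := by
  rcases lt_or_ge r N with h | h
  · have e1 : N - r + (q-1) = (N - r - 1) + q := by omega
    rw [e1, Nat.add_div_right _ hq]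
    constructor
    · intro hi
      have h2 : i ≤ (N - r - 1)/q := by omega
      have h3 := (Nat.le_div_iff_mul_le hq).1 h2
      rw [mul_comm] at h3
      omega
    · intro hi
      have h2 : i * q ≤ N - r - 1 := by rw [mul_comm]; omega
      have h3 := (Nat.le_div_iff_mul_le hq).2 h2
      omega
  · have e1 : N - r = 0 := by omega
    rw [e1, zero_add, Nat.div_eq_of_lt (by omega)]
    omega

lemma split_residues {q : ℕ} (hq : 0 < q) (N : ℕ) (F : ℕ → ℝ) :
    ∑ k ∈ Finset.range N, F k
      = ∑ r ∈ Finset.range q, ∑ i ∈ Finset.range ((N - r + (q-1))/q), F (q*i + r) := by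
  rw [Finset.sum_sigma']
  refine Finset.sum_nbij' (fun k => (⟨k % q, k / q⟩ : Σ _r : ℕ, ℕ)) (fun x => q * x.2 + x.1)
    ?_ ?_ ?_ ?_ ?_
  · intro k hk
    rw [Finset.mem_range] at hk
    simp only [Finset.mem_sigma, Finset.mem_range]
    refine ⟨Nat.mod_lt _ hq, ?_⟩
    rw [cnt_iff hq N (k % q) (Nat.mod_lt _ hq)]
    have := Nat.div_add_mod k q
    omega
  · intro x hx
    simp only [Finset.mem_sigma, Finset.mem_range] at hx
    rw [Finset.mem_range]
    exact (cnt_iff hq N x.1 hx.1 x.2).1 hx.2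
  · intro k _
    dsimp only
    have := Nat.div_add_mod k q
    omega
  · intro x hx
    simp only [Finset.mem_sigma, Finset.mem_range] at hx
    have h1 : (q * x.2 + x.1) % q = x.1 := by
      rw [Nat.mul_add_mod]
      exact Nat.mod_eq_of_lt hx.1
    have h2 : (q * x.2 + x.1) / q = x.2 := by
      rw [Nat.mul_add_div hq, Nat.div_eq_of_lt hx.1, add_zero]
    ext <;> simp [h1, h2]
  · intro k _
    dsimp only
    congr 1
    have := Nat.div_add_mod k q
    omega

/-- If `L = p/q` in lowest terms, `L_n = b_n/a_n → L`, and `a_n|δ_n| → ∞`, then for every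
`m ∈ ℤ` and `t > 0`, `(1/a_n) ∑_{j=1}^{⌊a_n t⌋} f̂_{m,L}(j L_n) → t ∫_0^1 f_{m,L}(x) dx`. -/
theorem sum_tendsto_integral_atTop_case (a b : ℕ → ℕ) (ha : StrictMono a) (hb : StrictMono b)
    (ha0 : ∀ n, 0 < a n) (hb0 : ∀ n, 0 < b n)
    (p q : ℕ) (hp : 0 < p) (hq : 0 < q) (hpq : Nat.Coprime p q)
    (L : ℝ) (hL : L = (p : ℝ) / (q : ℝ))
    (hconv : Tendsto (fun n => (b n : ℝ) / (a n : ℝ)) atTop (nhds L))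
    (hinf : Tendsto (fun n => (a n : ℝ) * |(b n : ℝ) / (a n : ℝ) - L|) atTop atTop) :
    ∀ (m : ℤ) (t : ℝ), 0 < t →
      Tendsto (fun n =>
        (1 / (a n : ℝ)) * ∑ j ∈ Finset.Icc (1 : ℤ) ⌊(a n : ℝ) * t⌋,
            fmLhat L m ((j : ℝ) * ((b n : ℝ) / (a n : ℝ))))
        atTop (nhds (t * ∫ x in (0 : ℝ)..1, fmL L m x)) := by
  intro m t ht
  have hgc : Continuous (fmL L m) := fmL_continuous L m
  set g : ℝ → ℝ := fmL L m with hg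
  set I : ℝ := ∫ x in (0:ℝ)..1, g x with hI
  have hqR : (0:ℝ) < q := by exact_mod_cast hq
  have hqL : (q:ℝ) * L = p := by rw [hL]; field_simp
  have haR : ∀ n, (0:ℝ) < a n := fun n => by exact_mod_cast ha0 n
  have hatop : Tendsto (fun n => (a n : ℝ)) atTop atTop :=
    tendsto_natCast_atTop_atTop.comp ha.tendsto_atTop
  -- notation
  set u : ℕ → ℝ := fun n => (b n : ℝ) / (a n : ℝ) with hu
  set d : ℕ → ℝ := fun n => u n - L with hd
  have hd0 : Tendsto d atTop (nhds 0) := by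
    simpa using hconv.sub_const L
  set s : ℕ → ℝ := fun n => q * d n with hs
  have hs0 : Tendsto s atTop (nhds 0) := by
    have := hd0.const_mul (q:ℝ)
    simpa using this
  have hadtop : Tendsto (fun n => (a n : ℝ) * |d n|) atTop atTop := hinf
  set Nf : ℕ → ℕ := fun n => (⌊(a n : ℝ) * t⌋).toNat with hNf
  have hNnat : ∀ n, (⌊(a n:ℝ) * t⌋ : ℤ) = ((Nf n : ℕ) : ℤ) := fun n =>
    (Int.toNat_of_nonneg (Int.floor_nonneg.2 (by positivity))).symm
  have hNub : ∀ n, (Nf n : ℝ) ≤ (a n:ℝ) * t := by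
    intro n
    have h1 : ((⌊(a n:ℝ) * t⌋ : ℤ) : ℝ) ≤ (a n:ℝ) * t := Int.floor_le _
    rw [hNnat n] at h1
    exact_mod_cast h1
  have hNlb : ∀ n, (a n:ℝ) * t - 1 ≤ (Nf n : ℝ) := by
    intro n
    have h1 : (a n:ℝ) * t - 1 < ((⌊(a n:ℝ) * t⌋ : ℤ) : ℝ) := Int.sub_one_lt_floor _
    rw [hNnat n] at h1
    exact_mod_cast h1.le
  set cnt : ℕ → ℕ → ℕ := fun n r => (Nf n - r + (q-1))/q with hcnt
  have hcnt_iff : ∀ n r, r < q → ∀ i : ℕ, (i < cnt n r ↔ q*i + r < Nf n) :=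
    fun n r hr i => cnt_iff hq (Nf n) r hr i
  have hcnt_ub : ∀ n r, r < q → (q * cnt n r : ℝ) ≤ (Nf n : ℝ) + q := by
    intro n r hr
    have : q * cnt n r ≤ Nf n + q := by
      rcases Nat.eq_zero_or_pos (cnt n r) with h0 | h1
      · rw [h0]; omega
      · obtain ⟨c', hc'⟩ := Nat.exists_eq_succ_of_ne_zero (Nat.pos_iff_ne_zero.1 h1)
        have h2 := (hcnt_iff n r hr c').1 (by omega)
        rw [hc', Nat.mul_succ]
        omega
    exact_mod_cast this
  have hcnt_lb : ∀ n r, r < q → (Nf n : ℝ) - q ≤ (q * cnt n r : ℝ) := by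
    intro n r hr
    have h2 : ¬ (q * cnt n r + r < Nf n) := fun hlt =>
      lt_irrefl _ ((hcnt_iff n r hr (cnt n r)).2 hlt)
    have : Nf n ≤ q * cnt n r + q := by omega
    have : (Nf n : ℝ) ≤ (q * cnt n r : ℕ) + q := by exact_mod_cast this
    push_cast at this ⊢
    linarith
  -- per-residue limits
  have Tper : ∀ r, r < q →
      Tendsto (fun n => (1/(a n:ℝ)) * ∑ i ∈ Finset.range (cnt n r),
          g (Int.fract (((r:ℝ)+1) * u n + i * s n))) atTop (nhds ((t/q) * I)) := by
    intro r hr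
    -- step hypothesis for lemA
    have hMs : Tendsto (fun n => (cnt n r : ℝ) * |s n|) atTop atTop := by
      have hlow : ∀ᶠ n in atTop, t * ((a n:ℝ) * |d n|) - (1+q) ≤ (cnt n r : ℝ) * |s n| := by
        have hd1 : ∀ᶠ n in atTop, |d n| ≤ 1 := by
          have := Metric.tendsto_nhds.1 hd0 1 one_pos
          filter_upwards [this] with n hn
          rw [Real.dist_eq, sub_zero] at hn; exact hn.le
        filter_upwards [hd1] with n hn
        have e1 : (cnt n r : ℝ) * |s n| = (q:ℝ) * (cnt n r : ℝ) * |d n| := by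
          rw [hs]
          dsimp only
          rw [abs_mul, abs_of_nonneg (le_of_lt hqR)]
          ring
        rw [e1]
        have h2 : ((Nf n : ℝ) - q) * |d n| ≤ (q:ℝ) * (cnt n r : ℝ) * |d n| :=
          mul_le_mul_of_nonneg_right (hcnt_lb n r hr) (abs_nonneg _)
        have h3 : ((a n:ℝ) * t - 1 - q) * |d n| ≤ ((Nf n : ℝ) - q) * |d n| :=
          mul_le_mul_of_nonneg_right (by linarith [hNlb n]) (abs_nonneg _)
        have h4 : t * ((a n:ℝ) * |d n|) - (1+q) ≤ ((a n:ℝ) * t - 1 - q) * |d n| := by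
          have habs : 0 ≤ |d n| := abs_nonneg _
          nlinarith
        linarith
      exact tendsto_atTop_mono' _ hlow
        (tendsto_atTop_add_const_right _ _ (hadtop.const_mul_atTop ht))
    have hinner := lemA hgc (fun n => ((r:ℝ)+1) * u n) s (fun n => cnt n r) hs0 hMs
    rw [← hI] at hinner
    -- ratio limit
    have hratio : Tendsto (fun n => (cnt n r : ℝ)/(a n : ℝ)) atTop (nhds (t/q)) := by
      have hup : ∀ n, (cnt n r : ℝ)/(a n : ℝ) ≤ t/q + 1/(a n:ℝ) := by
        intro n
        rw [div_add_div _ _ (ne_of_gt hqR) (ne_of_gt (haR n)), div_le_div_iff₀ (haR n) (mul_pos hqR (haR n))]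
        have h1 := hcnt_ub n r hr
        have h2 := hNub n
        push_cast at h1 ⊢
        nlinarith [haR n]
      have hlo : ∀ n, t/q - (2+q)/(q * (a n:ℝ)) ≤ (cnt n r : ℝ)/(a n : ℝ) := by
        intro n
        rw [div_sub_div _ _ (ne_of_gt hqR) (ne_of_gt (mul_pos hqR (haR n))),
          div_le_div_iff₀ (mul_pos hqR (mul_pos hqR (haR n))) (haR n)]
        have h1 := hcnt_lb n r hr
        have h2 := hNlb n
        have h3 : (a n:ℝ)*t - 1 - q ≤ (q:ℝ) * (cnt n r : ℝ) := by linarith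
        have h4 := mul_le_mul_of_nonneg_right h3 (le_of_lt (mul_pos hqR (haR n)))
        nlinarith [haR n, hqR]
      have hupT : Tendsto (fun n => t/q + 1/(a n:ℝ)) atTop (nhds (t/q)) := by
        have := Tendsto.div_atTop (tendsto_const_nhds (x := (1:ℝ))) hatop
        simpa using tendsto_const_nhds.add this
      have hloT : Tendsto (fun n => t/q - (2+q)/(q * (a n:ℝ))) atTop (nhds (t/q)) := by
        have h3 : Tendsto (fun n => q * (a n:ℝ)) atTop atTop := hatop.const_mul_atTop hqR
        have := Tendsto.div_atTop (tendsto_const_nhds (x := (2+q:ℝ))) h3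
        simpa using tendsto_const_nhds.sub this
      exact tendsto_of_tendsto_of_tendsto_of_le_of_le hloT hupT hlo hup
    have hprod := hratio.mul hinner
    -- eventual equality
    have hev : ∀ᶠ n in atTop, 1 ≤ cnt n r := by
      have := hMs.eventually_ge_atTop 1
      filter_upwards [this] with n hn
      by_contra hcon
      push_neg at hcon
      have h0 : cnt n r = 0 := by omega
      rw [h0] at hn
      norm_num at hn
    apply Tendsto.congr' _ hprod
    filter_upwards [hev] with n hn
    have hcne : (cnt n r : ℝ) ≠ 0 := by positivity
    field_simp
    simp only [mul_comm (s n)]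
  -- assemble
  have hsumT : Tendsto (fun n => ∑ r ∈ Finset.range q,
      (1/(a n:ℝ)) * ∑ i ∈ Finset.range (cnt n r),
          g (Int.fract (((r:ℝ)+1) * u n + i * s n))) atTop
      (nhds (∑ _r ∈ Finset.range q, (t/q) * I)) :=
    tendsto_finset_sum _ (fun r hrm => Tper r (Finset.mem_range.1 hrm))
  have hconst : (∑ _r ∈ Finset.range q, (t/q) * I) = t * I := by
    rw [Finset.sum_const, Finset.card_range, nsmul_eq_mul]
    field_simp
  rw [hconst] at hsumT
  apply hsumT.congr
  intro n
  -- rewrite the double sum back to the original sum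
  have funeq : ∑ j ∈ Finset.Icc (1 : ℤ) ⌊(a n : ℝ) * t⌋, fmLhat L m ((j : ℝ) * u n)
      = ∑ r ∈ Finset.range q, ∑ i ∈ Finset.range (cnt n r),
          g (Int.fract (((r:ℝ)+1) * u n + i * s n)) := by
    have h0 : (⌊(a n : ℝ) * t⌋ : ℤ) = ((Nf n : ℕ) : ℤ) := hNnat n
    rw [h0, icc_to_range (Nf n) (fun j => fmLhat L m ((j : ℝ) * u n))]
    push_cast
    rw [split_residues hq (Nf n) (fun k => fmLhat L m ((((k:ℕ):ℝ)+1) * u n))]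
    apply Finset.sum_congr rfl
    intro r hrm
    apply Finset.sum_congr rfl
    intro i _
    have harg : (((q*i+r : ℕ):ℝ)+1) * u n
        = (((r:ℝ)+1) * u n + (i:ℝ) * s n) + (((i*p : ℕ):ℤ):ℝ) := by
      rw [hs, hd, hu]
      push_cast
      linear_combination (i:ℝ) * hqL
    show g (Int.fract _) = g (Int.fract _)
    rw [harg, Int.fract_add_intCast]
  have hcal : (1 / (a n : ℝ)) * ∑ j ∈ Finset.Icc (1 : ℤ) ⌊(a n : ℝ) * t⌋, fmLhat L m ((j : ℝ) * u n)
      = ∑ r ∈ Finset.range q, (1/(a n:ℝ)) * ∑ i ∈ Finset.range (cnt n r),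
          g (Int.fract (((r:ℝ)+1) * u n + i * s n)) := by
    rw [funeq, Finset.mul_sum]
  exact hcal.symm
end
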